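/- Let σ be a signature and let 𝐀 and 𝐁 be σ-structures with the same iterated degree sequence, and let ({P_i : i ∈ I}, {Q_j : j ∈ J}) be the partition of the disjoint union 𝐀 ∪ 𝐁 whose P-classes collect the elements of A ∪ B with equal stable iterated degree and whose Q-classes collect the constraints of 𝒞_𝐀 ∪ 𝒞_𝐁 with equal stable iterated degree (taking k large enough that the degree partition has reached a fixed point). Then this partition is an equitable partition of 𝐀 ∪ 𝐁 with |P_i ∩ A| = |P_i ∩ B| for every i ∈ I and |Q_j ∩ 𝒞_𝐀| = |Q_j ∩ 𝒞_𝐁| for every j ∈ J; in particular 𝐀 and 𝐁 have a common equitable partition. -/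

import Mathlib

attribute [local instance] Classical.propDecidable

set_option maxHeartbeats 1000000

noncomputable section

/-- A relational structure over the signature given by symbols `σ` with arities `ar`,
with universe `A`: for each relation symbol, a set of tuples. -/
structure Struct (σ : Type) (ar : σ → ℕ) (A : Type) : Type where
  rel : ∀ R : σ, Set (Fin (ar R) → A)

variable {σ : Type} {ar : σ → ℕ}

/-- The set of constraints of a structure: pairs `(R, 𝐚)` with `𝐚 ∈ R(AA)`. -/
def Cons {A : Type} (AA : Struct σ ar A) : Type :=
  Σ R : σ, {u : Fin (ar R) → A // u ∈ AA.rel R}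

instance Cons.finite {A : Type} [Finite σ] [Finite A] {AA : Struct σ ar A} :
    Finite (Cons AA) :=
  inferInstanceAs (Finite (Σ R : σ, {u : Fin (ar R) → A // u ∈ AA.rel R}))

noncomputable instance Cons.fintype {A : Type} [Fintype σ] [Fintype A] {AA : Struct σ ar A} :
    Fintype (Cons AA) := Fintype.ofFinite _

/-- Labels `(S, R)` with `R ∈ σ` and `S ⊆ [arity R]`. -/
abbrev Label (σ : Type) (ar : σ → ℕ) : Type := Σ R : σ, Finset (Fin (ar R))

/-- The entry of the matrix representation `M_AA` of a structure at `(a, R(𝐚))`: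
the label `(S, R)` with `S = {i : 𝐚[i] = a}`. -/
def lab {A : Type} (AA : Struct σ ar A) (a : A) (c : Cons AA) : Label σ ar :=
  ⟨c.1, Finset.univ.filter fun i => c.2.1 i = a⟩

/-- The 0/1 matrix `M_AA^ℓ`. -/
def labMat {A : Type} (AA : Struct σ ar A) (ℓ : Label σ ar) : Matrix A (Cons AA) ℝ :=
  fun a c => if lab AA a c = ℓ then 1 else 0

/-- A doubly stochastic matrix: non-negative entries, all rows and all columns sum to 1. -/
def IsDoublyStochastic {α β : Type} [Fintype α] [Fintype β] (X : Matrix α β ℝ) : Prop :=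
  (∀ i j, 0 ≤ X i j) ∧ (∀ i, ∑ j, X i j = 1) ∧ (∀ j, ∑ i, X i j = 1)

/-- A left stochastic matrix: non-negative entries, all columns sum to 1. -/
def IsLeftStochastic {α β : Type} [Fintype α] (X : Matrix α β ℝ) : Prop :=
  (∀ i j, 0 ≤ X i j) ∧ (∀ j, ∑ i, X i j = 1)

/-- Fractional isomorphism: doubly stochastic `X`, `Y` with
`X M_AA^ℓ = M_BB^ℓ Y` and `M_AA^ℓ Yᵀ = Xᵀ M_BB^ℓ` for every label `ℓ`. -/
def FracIso {A B : Type} [Fintype σ] [Fintype A] [Fintype B]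
    (AA : Struct σ ar A) (BB : Struct σ ar B) : Prop :=
  ∃ (X : Matrix B A ℝ) (Y : Matrix (Cons BB) (Cons AA) ℝ),
    IsDoublyStochastic X ∧ IsDoublyStochastic Y ∧
    ∀ ℓ : Label σ ar,
      X * labMat AA ℓ = labMat BB ℓ * Y ∧
      labMat AA ℓ * Y.transpose = X.transpose * labMat BB ℓ

/-- The type of iterated degrees of depth `k`. -/
def DegT (L : Type) : ℕ → Type
  | 0 => Bool
  | k + 1 => Multiset (L × DegT L k)

/-- The iterated degree `δ_k` of an element or a constraint of a structure. -/
def iterDeg {A : Type} [Fintype σ] [Fintype A] (AA : Struct σ ar A) :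
    (k : ℕ) → A ⊕ Cons AA → DegT (Label σ ar) k
  | 0, x => x.isLeft
  | k + 1, Sum.inl a =>
      (Finset.univ.val.map fun c : Cons AA => (lab AA a c, iterDeg AA k (Sum.inr c)) :
        Multiset (Label σ ar × DegT (Label σ ar) k))
  | k + 1, Sum.inr c =>
      (Finset.univ.val.map fun a : A => (lab AA a c, iterDeg AA k (Sum.inl a)) :
        Multiset (Label σ ar × DegT (Label σ ar) k))

/-- Two structures have the same iterated degree sequence. -/
def SameIterDeg {A B : Type} [Fintype σ] [Fintype A] [Fintype B]
    (AA : Struct σ ar A) (BB : Struct σ ar B) : Prop :=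
  ∀ k : ℕ,
    Multiset.map (iterDeg AA k) (Finset.univ.val : Multiset (A ⊕ Cons AA)) =
    Multiset.map (iterDeg BB k) (Finset.univ.val : Multiset (B ⊕ Cons BB))
/-- An equitable partition of a structure, given by index maps `p` (on the universe)
and `q` (on the constraints) together with its parameters `cpar`, `dpar`. -/
def IsEquitable {A : Type} (AA : Struct σ ar A) {I : Type u} {J : Type v}
    (p : A → I) (q : Cons AA → J)
    (cpar : Label σ ar → I → J → ℕ) (dpar : Label σ ar → J → I → ℕ) : Prop :=
  (∀ (a : A) (ℓ : Label σ ar) (j : J),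
      Nat.card {c : Cons AA // q c = j ∧ lab AA a c = ℓ} = cpar ℓ (p a) j) ∧
  (∀ (c : Cons AA) (ℓ : Label σ ar) (i : I),
      Nat.card {a : A // p a = i ∧ lab AA a c = ℓ} = dpar ℓ (q c) i)

/-- Two structures have a common equitable partition: equitable partitions with the same
index sets, the same parameters, and corresponding classes of equal sizes. -/
def CommonEquitable {A B : Type} (AA : Struct σ ar A) (BB : Struct σ ar B) : Prop :=
  ∃ (I J : Type) (pA : A → I) (qA : Cons AA → J) (pB : B → I) (qB : Cons BB → J)
    (cpar : Label σ ar → I → J → ℕ) (dpar : Label σ ar → J → I → ℕ),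
    IsEquitable AA pA qA cpar dpar ∧ IsEquitable BB pB qB cpar dpar ∧
    (∀ i : I, Nat.card {a : A // pA a = i} = Nat.card {b : B // pB b = i}) ∧
    (∀ j : J, Nat.card {c : Cons AA // qA c = j} = Nat.card {c : Cons BB // qB c = j})

/-- `h` is a homomorphism from `AA` to `BB`. -/
def IsHom {A B : Type} (AA : Struct σ ar A) (BB : Struct σ ar B) (h : A → B) : Prop :=
  ∀ (R : σ) (u : Fin (ar R) → A), u ∈ AA.rel R → (fun i => h (u i)) ∈ BB.rel R

/-- The number of homomorphisms from `AA` to `BB`. -/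
def homCount {A B : Type} (AA : Struct σ ar A) (BB : Struct σ ar B) : ℕ :=
  Nat.card {h : A → B // IsHom AA BB h}

/-- The number of homomorphisms from `(TT, t)` to `(DD, d)` (with a designated element). -/
def rhomCount {T D : Type} (TT : Struct σ ar T) (t : T) (DD : Struct σ ar D) (d : D) : ℕ :=
  Nat.card {h : T → D // IsHom TT DD h ∧ h t = d}

/-- The factor graph of a structure: bipartite graph on elements and constraints. -/
def factorGraph {A : Type} (AA : Struct σ ar A) : SimpleGraph (A ⊕ Cons AA) :=
  SimpleGraph.fromRel fun x y =>
    ∃ (a : A) (c : Cons AA), x = Sum.inl a ∧ y = Sum.inr c ∧ ∃ i, c.2.1 i = a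

/-- A structure is an ftree if its factor graph is a tree. -/
def IsFtree {A : Type} (AA : Struct σ ar A) : Prop := (factorGraph AA).IsTree
/-- The set `{𝐚}` of elements occurring in the tuple of a constraint, as a Finset. -/
def tsupp {A : Type} {AA : Struct σ ar A} (c : Cons AA) : Finset A :=
  Finset.univ.image c.2.1

lemma mem_tsupp {A : Type} {AA : Struct σ ar A} (c : Cons AA) (i : Fin (ar c.1)) :
    c.2.1 i ∈ tsupp c :=
  Finset.mem_image_of_mem _ (Finset.mem_univ i)

/-- Feasibility of the system `SA^k(AA, BB)`. -/
def SAfeasible {A B : Type} [Fintype B] (k : ℕ)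
    (AA : Struct σ ar A) (BB : Struct σ ar B) : Prop :=
  ∃ (pV : (V : Finset A) → ({x // x ∈ V} → B) → ℝ)
    (pC : (c : Cons AA) → ({x // x ∈ tsupp c} → B) → ℝ),
    -- all variables take values in [0,1]
    (∀ (V : Finset A) (f : {x // x ∈ V} → B),
        V.Nonempty → V.card ≤ k → 0 ≤ pV V f ∧ pV V f ≤ 1) ∧
    (∀ (c : Cons AA) (f : {x // x ∈ tsupp c} → B), 0 ≤ pC c f ∧ pC c f ≤ 1) ∧
    -- (SA1)
    (∀ V : Finset A, V.Nonempty → V.card ≤ k →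
        ∑ f : {x // x ∈ V} → B, pV V f = 1) ∧
    -- (SA2)
    (∀ (U V : Finset A) (hUV : U ⊆ V), U.Nonempty → V.card ≤ k →
        ∀ f : {x // x ∈ U} → B,
          pV U f = ∑ g : {x // x ∈ V} → B,
            if ∀ u : {x // x ∈ U}, g ⟨u.1, hUV u.2⟩ = f u then pV V g else 0) ∧
    -- (SA3)
    (∀ (c : Cons AA) (U : Finset A) (hU : U ⊆ tsupp c), U.Nonempty → U.card ≤ k →
        ∀ f : {x // x ∈ U} → B,
          pV U f = ∑ g : {x // x ∈ tsupp c} → B,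
            if ∀ u : {x // x ∈ U}, g ⟨u.1, hU u.2⟩ = f u then pC c g else 0) ∧
    -- (SA4)
    (∀ (c : Cons AA) (f : {x // x ∈ tsupp c} → B),
        (fun i => f ⟨c.2.1 i, mem_tsupp c i⟩) ∉ BB.rel c.1 → pC c f = 0)

/-- The relation symbols of the signature `σ*_k`. -/
inductive StarSym (σ : Type) (ar : σ → ℕ) (k : ℕ) : Type
  | TS (j : Fin k) (S : Finset (Fin (j.1 + 1)))
  | TI (j j' : Fin k) (iv : Fin (j'.1 + 1) → Fin (j.1 + 1))
  | RS (R : σ) (S : Finset (Fin (ar R)))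
  | RI (R : σ) (j : Fin k) (iv : Fin (j.1 + 1) → Fin (ar R))

/-- Arities for `σ*_k`. -/
def starAr {k : ℕ} : StarSym σ ar k → ℕ
  | .TS _ _ => 1
  | .TI _ _ _ => 2
  | .RS _ _ => 1
  | .RI _ _ _ => 2

/-- The universe of `AA*_k`: all tuples of length `1 ≤ j ≤ k` together with the constraints. -/
def StarUniv {A : Type} (AA : Struct σ ar A) (k : ℕ) : Type :=
  ((j : Fin k) × (Fin (j.1 + 1) → A)) ⊕ Cons AA

instance StarUniv.finite {A : Type} [Finite σ] [Finite A] {AA : Struct σ ar A} {k : ℕ} :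
    Finite (StarUniv AA k) :=
  inferInstanceAs (Finite (((j : Fin k) × (Fin (j.1 + 1) → A)) ⊕ Cons AA))

noncomputable instance StarUniv.fintype {A : Type} [Fintype σ] [Fintype A]
    {AA : Struct σ ar A} {k : ℕ} : Fintype (StarUniv AA k) := Fintype.ofFinite _

/-- The structure `AA*_k`. -/
def starStruct {A : Type} (AA : Struct σ ar A) (k : ℕ) :
    Struct (StarSym σ ar k) starAr (StarUniv AA k) where
  rel
    | .TS j S => {u | ∃ v : Fin (j.1 + 1) → A,
        (∀ i ∈ S, ∀ i' ∈ S, v i = v i') ∧ u = fun _ => Sum.inl ⟨j, v⟩}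
    | .TI j j' iv => {u | ∃ v : Fin (j.1 + 1) → A,
        u = ![Sum.inl ⟨j, v⟩, Sum.inl ⟨j', v ∘ iv⟩]}
    | .RS R S => {u | ∃ (v : Fin (ar R) → A) (hv : v ∈ AA.rel R),
        (∀ i ∈ S, ∀ i' ∈ S, v i = v i') ∧ u = fun _ => Sum.inr ⟨R, ⟨v, hv⟩⟩}
    | .RI R j iv => {u | ∃ (v : Fin (ar R) → A) (hv : v ∈ AA.rel R),
        u = ![Sum.inr ⟨R, ⟨v, hv⟩⟩, Sum.inl ⟨j, v ∘ iv⟩]}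

/-- `AA ≡_k BB` : the structures `AA*_k` and `BB*_k` have a common equitable partition. -/
def EquivK {A B : Type} (k : ℕ) (AA : Struct σ ar A) (BB : Struct σ ar B) : Prop :=
  CommonEquitable (starStruct AA k) (starStruct BB k)

/-- A bundled σ-structure with finite universe. -/
structure FinStruct (σ : Type) (ar : σ → ℕ) : Type 1 where
  carrier : Type
  [fin : Fintype carrier]
  str : Struct σ ar carrier

/-- One step in a chain: either a homomorphism exists, or the structures are
`≡_1`-equivalent (i.e. have a common equitable partition). -/
def FStep (X Y : FinStruct σ ar) : Prop :=
  (∃ h : X.carrier → Y.carrier, IsHom X.str Y.str h) ∨ CommonEquitable X.str Y.str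

/-- The structure `AA` has treewidth `< k`: there is a tree-decomposition all of whose
bags have at most `k` elements. -/
def HasTreewidthLT {A : Type} (AA : Struct σ ar A) (k : ℕ) : Prop :=
  ∃ (V : Type) (G : SimpleGraph V) (β : V → Finset A),
    G.IsTree ∧
    (∀ c : Cons AA, ∃ v : V, ∀ i, c.2.1 i ∈ β v) ∧
    (∀ (a : A) (u v : V), a ∈ β u → a ∈ β v →
      ∀ p : G.Walk u v, p.IsPath → ∀ w ∈ p.support, a ∈ β w) ∧
    (∀ v : V, (β v).card ≤ k)
/-- The adjacency matrix of a graph (a structure with one binary relation). -/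
def adjMat {A : Type} (AA : Struct Unit (fun _ => 2) A) : Matrix A A ℝ :=
  fun a a' => if ![a, a'] ∈ AA.rel () then 1 else 0

/-- A matrix is decomposable if, up to partitioning rows and columns into two
(nontrivial) blocks, it is a direct sum. -/
def MDecomposable {V W : Type} (M : Matrix V W ℝ) : Prop :=
  ∃ (SV : Set V) (SW : Set W),
    (SV.Nonempty ∨ SW.Nonempty) ∧ (SVᶜ.Nonempty ∨ SWᶜ.Nonempty) ∧
    ∀ v w, (v ∈ SV ∧ w ∉ SW) ∨ (v ∉ SV ∧ w ∈ SW) → M v w = 0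

/-- A bundled rooted ftree. -/
structure RootedFtree (σ : Type) (ar : σ → ℕ) : Type 1 where
  carrier : Type
  [fin : Fintype carrier]
  str : Struct σ ar carrier
  isFtree : IsFtree str
  root : carrier

/-- The profile of an element: the number of homomorphisms from each rooted ftree
mapping the root to it. -/
def degProfile {D : Type} (DD : Struct σ ar D) (d : D) : RootedFtree σ ar → ℕ :=
  fun F => rhomCount F.str F.root DD d

/-- The class of a constraint: its relation symbol, its equality pattern, and the
`degProfile`-classes of its coordinates. -/
def qProfile {D : Type} (DD : Struct σ ar D) (c : Cons DD) :
    Σ R : σ, Set (Fin (ar R) × Fin (ar R)) × (Fin (ar R) → (RootedFtree σ ar → ℕ)) :=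
  ⟨c.1, ({p | c.2.1 p.1 = c.2.1 p.2}, fun s => degProfile DD (c.2.1 s))⟩

/-- Number of homomorphisms with a designated element and a designated constraint. -/
def rhomCount2 {T D : Type} (TT : Struct σ ar T) (t : T) (c : Cons TT)
    (DD : Struct σ ar D) (d : D) (c' : Cons DD) : ℕ :=
  Nat.card {h : T → D // IsHom TT DD h ∧ h t = d ∧
    (⟨c.1, fun i => h (c.2.1 i)⟩ : Σ R : σ, Fin (ar R) → D) = ⟨c'.1, c'.2.1⟩}

/-- `(t, R(𝐭))` can be mapped to `(d, R'(𝐝))`. -/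
def CanMap {T D : Type} {TT : Struct σ ar T} {DD : Struct σ ar D}
    (t : T) (c : Cons TT) (d : D) (c' : Cons DD) : Prop :=
  ∃ hR : c.1 = c'.1,
    (∀ s s' : Fin (ar c.1), c.2.1 s = c.2.1 s' →
        c'.2.1 (Fin.cast (congrArg ar hR) s) = c'.2.1 (Fin.cast (congrArg ar hR) s')) ∧
    (∀ s : Fin (ar c.1), c.2.1 s = t → c'.2.1 (Fin.cast (congrArg ar hR) s) = d)

/-- A substructure of a structure: a subset of the universe together with a subset of
the tuples of each relation, lying inside the subset. -/
structure Substr {A : Type} (AA : Struct σ ar A) : Type where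
  carrier : Set A
  srel : ∀ R : σ, Set (Fin (ar R) → A)
  srel_sub : ∀ R : σ, srel R ⊆ AA.rel R
  srel_mem : ∀ R : σ, ∀ u ∈ srel R, ∀ i, u i ∈ carrier

/-- The substructure as a structure in its own right. -/
def Substr.toStruct {A : Type} {AA : Struct σ ar A} (Q : Substr AA) :
    Struct σ ar {x // x ∈ Q.carrier} where
  rel R := {u | (fun i => (u i).1) ∈ Q.srel R}

/-- Containment of substructures. -/
def Substr.le {A : Type} {AA : Struct σ ar A} (Q Q' : Substr AA) : Prop :=
  Q.carrier ⊆ Q'.carrier ∧ ∀ R : σ, Q.srel R ⊆ Q'.srel R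

/-- A subftree of `TT` avoiding the constraint `c`, containing a unique element of the
tuple of `c`, which moreover participates in exactly one constraint of the subftree. -/
def GoodPiece {T : Type} (TT : Struct σ ar T) (c : Cons TT) (Q : Substr TT) : Prop :=
  IsFtree Q.toStruct ∧
  c.2.1 ∉ Q.srel c.1 ∧
  ∃ x ∈ Q.carrier, (∃ i, c.2.1 i = x) ∧
    (∀ y ∈ Q.carrier, (∃ i, c.2.1 i = y) → y = x) ∧
    (∃! e : Σ R : σ, {u // u ∈ Q.srel R}, ∃ i, e.2.1 i = x)

/-- The collection `TT \ c` of maximal subftrees as above. -/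
def TreeMinus {T : Type} (TT : Struct σ ar T) (c : Cons TT) : Set (Substr TT) :=
  {Q | GoodPiece TT c Q ∧ ∀ Q' : Substr TT, GoodPiece TT c Q' → Q.le Q' → Q'.le Q}

/-- The disjoint union of two structures. -/
def dUnion {A B : Type} (AA : Struct σ ar A) (BB : Struct σ ar B) :
    Struct σ ar (A ⊕ B) where
  rel R := {u | (∃ v ∈ AA.rel R, u = fun i => Sum.inl (v i)) ∨
                (∃ v ∈ BB.rel R, u = fun i => Sum.inr (v i))}

/-- Embedding of constraints of `AA` into constraints of the disjoint union. -/
def consInl {A B : Type} (AA : Struct σ ar A) (BB : Struct σ ar B) (c : Cons AA) :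
    Cons (dUnion AA BB) :=
  ⟨c.1, ⟨fun i => Sum.inl (c.2.1 i), Or.inl ⟨c.2.1, c.2.2, rfl⟩⟩⟩

/-- Embedding of constraints of `BB` into constraints of the disjoint union. -/
def consInr {A B : Type} (AA : Struct σ ar A) (BB : Struct σ ar B) (c : Cons BB) :
    Cons (dUnion AA BB) :=
  ⟨c.1, ⟨fun i => Sum.inr (c.2.1 i), Or.inr ⟨c.2.1, c.2.2, rfl⟩⟩⟩

/-- The stable-degree class of an element of the disjoint union: its full iterated
degree sequence. -/
def degPclass {A B : Type} [Fintype σ] [Fintype A] [Fintype B]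
    (AA : Struct σ ar A) (BB : Struct σ ar B) (x : A ⊕ B) :
    (k : ℕ) → DegT (Label σ ar) k :=
  fun k => iterDeg (dUnion AA BB) k (Sum.inl x)

/-- The stable-degree class of a constraint of the disjoint union. -/
def degQclass {A B : Type} [Fintype σ] [Fintype A] [Fintype B]
    (AA : Struct σ ar A) (BB : Struct σ ar B) (c : Cons (dUnion AA BB)) :
    (k : ℕ) → DegT (Label σ ar) k :=
  fun k => iterDeg (dUnion AA BB) k (Sum.inr c)
/-- The set `Y`: tuples in `(B × [m])^m` with no repeated entries, in which the copy
index of each entry is bounded by the number of occurrences of its `B`-component. -/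
def Ytype (B : Type) (m : ℕ) : Type :=
  {y : Fin m → B × Fin m // Function.Injective y ∧
    ∀ i, ((y i).2 : ℕ) + 1 ≤ Nat.card {j : Fin m // (y j).1 = (y i).1}}

/-- Permuting the coordinates of an element of `Y`. -/
def permY {B : Type} {m : ℕ} (τ : Equiv.Perm (Fin m)) (y : Ytype B m) : Ytype B m :=
  ⟨fun i => y.1 (τ i), y.2.1.comp τ.injective, fun i => by
    have h := y.2.2 (τ i)
    have hc : Nat.card {j : Fin m // (y.1 (τ j)).1 = (y.1 (τ i)).1}
        = Nat.card {j : Fin m // (y.1 j).1 = (y.1 (τ i)).1} :=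
      Nat.card_congr (τ.subtypeEquiv fun j => Iff.rfl)
    exact le_trans h (le_of_eq hc.symm)⟩

/-- The structure `X₁` from the proof of Theorem `thm:SA1`, built from a choice
function `choice` selecting a canonical element of `Y` for each multiset. -/
def X1struct {A B : Type} (AA : Struct σ ar A) (BB : Struct σ ar B) (m : ℕ)
    (choice : (Fin m → B) → Ytype B m) : Struct σ ar (A × Ytype B m) where
  rel R := {u | ∃ a : Fin (ar R) → A, a ∈ AA.rel R ∧
    ∃ tt : Fin m → Fin (ar R) → B,
      (∀ i, tt i ∈ BB.rel R) ∧
      (∀ i s s', a s = a s' → tt i s = tt i s') ∧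
      ∃ τ : Equiv.Perm (Fin m),
        u = fun s => (a s, permY τ (choice fun i => tt i s))}

namespace Stmt19Aux
set_option linter.unusedSectionVars false

open Multiset

variable {σ : Type} {ar : σ → ℕ}

/-- A default degree value. -/
def degTdefault (L : Type) : (k : ℕ) → DegT L k
  | 0 => true
  | _ + 1 => (0 : Multiset _)

lemma iterDeg_zero {A : Type} [Fintype σ] [Fintype A] (S : Struct σ ar A) (x : A ⊕ Cons S) :
    iterDeg S 0 x = x.isLeft := rfl

lemma iterDeg_succ_inl {A : Type} [Fintype σ] [Fintype A] (S : Struct σ ar A) (k : ℕ) (a : A) :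
    (iterDeg S (k+1) (Sum.inl a) : Multiset (Label σ ar × DegT (Label σ ar) k))
      = Multiset.map (fun c : Cons S => (lab S a c, iterDeg S k (Sum.inr c)))
          (Finset.univ : Finset (Cons S)).val := rfl

lemma iterDeg_succ_inr {A : Type} [Fintype σ] [Fintype A] (S : Struct σ ar A) (k : ℕ)
    (c : Cons S) :
    (iterDeg S (k+1) (Sum.inr c) : Multiset (Label σ ar × DegT (Label σ ar) k))
      = Multiset.map (fun a : A => (lab S a c, iterDeg S k (Sum.inl a)))
          (Finset.univ : Finset A).val := rfl

lemma univ_sum_val {α β : Type} [Fintype α] [Fintype β] :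
    (Finset.univ : Finset (α ⊕ β)).val
      = Multiset.map Sum.inl (Finset.univ : Finset α).val
        + Multiset.map Sum.inr (Finset.univ : Finset β).val := by
  rw [← Finset.univ_disjSum_univ, Finset.val_disjSum]
  rfl

lemma count_map_univ_inj {α β : Type} [Fintype α] (f : α → β) (hf : Function.Injective f)
    (b : β) :
    Multiset.count b (Multiset.map f (Finset.univ : Finset α).val)
      = if ∃ a, f a = b then 1 else 0 := by
  classical
  split_ifs with hb
  · obtain ⟨a, rfl⟩ := hb
    rw [Multiset.count_map_eq_count' f _ hf, Multiset.count_univ]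
  · rw [Multiset.count_eq_zero]
    intro hmem
    obtain ⟨a, -, hfa⟩ := Multiset.mem_map.mp hmem
    exact hb ⟨a, hfa⟩

/-- Separation of element-degrees and constraint-degrees. -/
lemma sep : ∀ (k : ℕ) {A B : Type} [Fintype σ] [Fintype A] [Fintype B]
    (S : Struct σ ar A) (T : Struct σ ar B),
    Fintype.card A = Fintype.card B → Fintype.card (Cons S) = Fintype.card (Cons T) →
    ∀ (a : A) (c : Cons T), iterDeg S (k+1) (Sum.inl a) ≠ iterDeg T (k+1) (Sum.inr c) := by
  intro k
  induction k with
  | zero =>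
    intro A B _ _ _ S T hU hC a c hEq
    have hCS : (Finset.univ : Finset (Cons S)).Nonempty := by
      rw [← Finset.card_pos, Finset.card_univ, hC]
      exact Fintype.card_pos_iff.mpr ⟨c⟩
    obtain ⟨c₀, -⟩ := hCS
    have hEq' : Multiset.map (fun c' : Cons S => (lab S a c', iterDeg S 0 (Sum.inr c')))
          (Finset.univ : Finset (Cons S)).val
        = Multiset.map (fun b : B => (lab T b c, iterDeg T 0 (Sum.inl b)))
          (Finset.univ : Finset B).val := by
      rw [← iterDeg_succ_inl, ← iterDeg_succ_inr]; exact hEq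
    have hmem : (lab S a c₀, iterDeg S 0 (Sum.inr c₀))
        ∈ Multiset.map (fun b : B => (lab T b c, iterDeg T 0 (Sum.inl b)))
          (Finset.univ : Finset B).val := by
      rw [← hEq']
      exact Multiset.mem_map_of_mem _ (Finset.mem_univ c₀)
    obtain ⟨b, -, hb⟩ := Multiset.mem_map.mp hmem
    have h2 := congrArg Prod.snd hb
    simp only [iterDeg_zero] at h2
    simp at h2
  | succ k IH =>
    intro A B _ _ _ S T hU hC a c hEq
    have hCS : (Finset.univ : Finset (Cons S)).Nonempty := by
      rw [← Finset.card_pos, Finset.card_univ, hC]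
      exact Fintype.card_pos_iff.mpr ⟨c⟩
    obtain ⟨c₀, -⟩ := hCS
    have hEq' : Multiset.map (fun c' : Cons S => (lab S a c', iterDeg S (k+1) (Sum.inr c')))
          (Finset.univ : Finset (Cons S)).val
        = Multiset.map (fun b : B => (lab T b c, iterDeg T (k+1) (Sum.inl b)))
          (Finset.univ : Finset B).val := by
      rw [← iterDeg_succ_inl, ← iterDeg_succ_inr]; exact hEq
    have hmem : (lab S a c₀, iterDeg S (k+1) (Sum.inr c₀))
        ∈ Multiset.map (fun b : B => (lab T b c, iterDeg T (k+1) (Sum.inl b)))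
          (Finset.univ : Finset B).val := by
      rw [← hEq']
      exact Multiset.mem_map_of_mem _ (Finset.mem_univ c₀)
    obtain ⟨b, -, hb⟩ := Multiset.mem_map.mp hmem
    have h2 := congrArg Prod.snd hb
    exact IH T S hU.symm hC.symm b c₀ h2

lemma sep' (k : ℕ) {A B : Type} [Fintype σ] [Fintype A] [Fintype B]
    (S : Struct σ ar A) (T : Struct σ ar B)
    (hU : Fintype.card A = Fintype.card B)
    (hC : Fintype.card (Cons S) = Fintype.card (Cons T))
    (a : A) (c : Cons T) : iterDeg S k (Sum.inl a) ≠ iterDeg T k (Sum.inr c) := by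
  cases k with
  | zero => simp [iterDeg_zero]; exact Bool.noConfusion
  | succ k => exact sep k S T hU hC a c

/-- Refinement: degrees at level `k+1` determine degrees at level `k`. -/
lemma ref : ∀ (k : ℕ) {A B : Type} [Fintype σ] [Fintype A] [Fintype B]
    (S : Struct σ ar A) (T : Struct σ ar B),
    Fintype.card A = Fintype.card B → Fintype.card (Cons S) = Fintype.card (Cons T) →
    ∀ (x : A ⊕ Cons S) (y : B ⊕ Cons T),
      iterDeg S (k+1) x = iterDeg T (k+1) y → iterDeg S k x = iterDeg T k y := by
  intro k
  induction k with
  | zero =>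
    intro A B _ _ _ S T hU hC x y hEq
    match x, y with
    | .inl a, .inl b => rfl
    | .inl a, .inr c => exact absurd hEq (sep 0 S T hU hC a c)
    | .inr c, .inl a => exact absurd hEq.symm (sep 0 T S hU.symm hC.symm a c)
    | .inr c, .inr c' => rfl
  | succ k IH =>
    intro A B _ _ _ S T hU hC x y hEq
    match x, y with
    | .inl a, .inr c => exact absurd hEq (sep (k+1) S T hU hC a c)
    | .inr c, .inl a => exact absurd hEq.symm (sep (k+1) T S hU.symm hC.symm a c)
    | .inl a, .inl b =>
      set t : DegT (Label σ ar) (k+1) → DegT (Label σ ar) k := fun v =>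
        if h1 : ∃ c' : Cons S, iterDeg S (k+1) (Sum.inr c') = v then
          iterDeg S k (Sum.inr h1.choose)
        else if h2 : ∃ c' : Cons T, iterDeg T (k+1) (Sum.inr c') = v then
          iterDeg T k (Sum.inr h2.choose)
        else degTdefault _ k with ht
      have ht1 : ∀ c' : Cons S, t (iterDeg S (k+1) (Sum.inr c')) = iterDeg S k (Sum.inr c') := by
        intro c'
        have h1 : ∃ c'' : Cons S,
            iterDeg S (k+1) (Sum.inr c'') = iterDeg S (k+1) (Sum.inr c') := ⟨c', rfl⟩
        simp only [ht]; rw [dif_pos h1]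
        exact IH S S rfl rfl _ _ h1.choose_spec
      have ht2 : ∀ c' : Cons T, t (iterDeg T (k+1) (Sum.inr c')) = iterDeg T k (Sum.inr c') := by
        intro c'
        by_cases h1 : ∃ c'' : Cons S,
            iterDeg S (k+1) (Sum.inr c'') = iterDeg T (k+1) (Sum.inr c')
        · simp only [ht]; rw [dif_pos h1]
          exact IH S T hU hC _ _ h1.choose_spec
        · have h2 : ∃ c'' : Cons T,
              iterDeg T (k+1) (Sum.inr c'') = iterDeg T (k+1) (Sum.inr c') := ⟨c', rfl⟩
          simp only [ht]; rw [dif_neg h1, dif_pos h2]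
          exact IH T T rfl rfl _ _ h2.choose_spec
      have e1 : iterDeg S (k+1) (Sum.inl a)
          = Multiset.map (Prod.map id t) (iterDeg S (k+2) (Sum.inl a)) := by
        rw [iterDeg_succ_inl, iterDeg_succ_inl, Multiset.map_map]
        refine (Multiset.map_congr rfl ?_).symm
        intro c' _
        simp only [Function.comp, Prod.map, id, ht1 c']
      have e2 : iterDeg T (k+1) (Sum.inl b)
          = Multiset.map (Prod.map id t) (iterDeg T (k+2) (Sum.inl b)) := by
        rw [iterDeg_succ_inl, iterDeg_succ_inl, Multiset.map_map]
        refine (Multiset.map_congr rfl ?_).symm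
        intro c' _
        simp only [Function.comp, Prod.map, id, ht2 c']
      rw [e1, e2, hEq]
    | .inr c, .inr c' =>
      set t : DegT (Label σ ar) (k+1) → DegT (Label σ ar) k := fun v =>
        if h1 : ∃ a' : A, iterDeg S (k+1) (Sum.inl a') = v then
          iterDeg S k (Sum.inl h1.choose)
        else if h2 : ∃ b' : B, iterDeg T (k+1) (Sum.inl b') = v then
          iterDeg T k (Sum.inl h2.choose)
        else degTdefault _ k with ht
      have ht1 : ∀ a' : A, t (iterDeg S (k+1) (Sum.inl a')) = iterDeg S k (Sum.inl a') := by
        intro a'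
        have h1 : ∃ a'' : A,
            iterDeg S (k+1) (Sum.inl a'') = iterDeg S (k+1) (Sum.inl a') := ⟨a', rfl⟩
        simp only [ht]; rw [dif_pos h1]
        exact IH S S rfl rfl _ _ h1.choose_spec
      have ht2 : ∀ b' : B, t (iterDeg T (k+1) (Sum.inl b')) = iterDeg T k (Sum.inl b') := by
        intro b'
        by_cases h1 : ∃ a'' : A, iterDeg S (k+1) (Sum.inl a'') = iterDeg T (k+1) (Sum.inl b')
        · simp only [ht]; rw [dif_pos h1]
          exact IH S T hU hC _ _ h1.choose_spec
        · have h2 : ∃ b'' : B,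
              iterDeg T (k+1) (Sum.inl b'') = iterDeg T (k+1) (Sum.inl b') := ⟨b', rfl⟩
          simp only [ht]; rw [dif_neg h1, dif_pos h2]
          exact IH T T rfl rfl _ _ h2.choose_spec
      have e1 : iterDeg S (k+1) (Sum.inr c)
          = Multiset.map (Prod.map id t) (iterDeg S (k+2) (Sum.inr c)) := by
        rw [iterDeg_succ_inr, iterDeg_succ_inr, Multiset.map_map]
        refine (Multiset.map_congr rfl ?_).symm
        intro a' _
        simp only [Function.comp, Prod.map, id, ht1 a']
      have e2 : iterDeg T (k+1) (Sum.inr c')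
          = Multiset.map (Prod.map id t) (iterDeg T (k+2) (Sum.inr c')) := by
        rw [iterDeg_succ_inr, iterDeg_succ_inr, Multiset.map_map]
        refine (Multiset.map_congr rfl ?_).symm
        intro b' _
        simp only [Function.comp, Prod.map, id, ht2 b']
      rw [e1, e2, hEq]


section Two

variable {A B : Type} [Fintype σ] [Fintype A] [Fintype B]
variable (AA : Struct σ ar A) (BB : Struct σ ar B)

/-- Embedding of the constraints of the components into the disjoint union. -/
def embC : Cons AA ⊕ Cons BB → Cons (dUnion AA BB) :=
  Sum.elim (consInl AA BB) (consInr AA BB)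

/-- Component degree of an element of `A ⊕ B`. -/
def compDegE (k : ℕ) : A ⊕ B → DegT (Label σ ar) k := fun x =>
  match x with
  | .inl a => iterDeg AA k (.inl a)
  | .inr b => iterDeg BB k (.inl b)

/-- Component degree of a constraint. -/
def compDegC (k : ℕ) : Cons AA ⊕ Cons BB → DegT (Label σ ar) k := fun u =>
  match u with
  | .inl c => iterDeg AA k (.inr c)
  | .inr c => iterDeg BB k (.inr c)

/-- Elements with equal component degrees have equal degrees in the disjoint union. -/
def CE (k : ℕ) : Prop := ∀ x y : A ⊕ B, compDegE AA BB k x = compDegE AA BB k y →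
  iterDeg (dUnion AA BB) k (.inl x) = iterDeg (dUnion AA BB) k (.inl y)

/-- Constraints with equal component degrees have equal degrees in the disjoint union. -/
def CC (k : ℕ) : Prop := ∀ u v : Cons AA ⊕ Cons BB, compDegC AA BB k u = compDegC AA BB k v →
  iterDeg (dUnion AA BB) k (.inr (embC AA BB u)) = iterDeg (dUnion AA BB) k (.inr (embC AA BB v))

lemma lab_inl (a : A) (c : Cons AA) :
    lab (dUnion AA BB) (Sum.inl a) (consInl AA BB c) = lab AA a c := by
  refine congrArg (Sigma.mk c.1) ?_
  ext i
  simp [Finset.mem_filter, consInl]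
  exact Iff.rfl

lemma lab_inr (b : B) (c : Cons BB) :
    lab (dUnion AA BB) (Sum.inr b) (consInr AA BB c) = lab BB b c := by
  refine congrArg (Sigma.mk c.1) ?_
  ext i
  simp [Finset.mem_filter, consInr]
  exact Iff.rfl

lemma lab_cross_ab (a : A) (c : Cons BB) :
    lab (dUnion AA BB) (Sum.inl a) (consInr AA BB c) = ⟨c.1, ∅⟩ := by
  refine congrArg (Sigma.mk c.1) ?_
  ext i
  simp [Finset.mem_filter, consInr]

lemma lab_cross_ba (b : B) (c : Cons AA) :
    lab (dUnion AA BB) (Sum.inr b) (consInl AA BB c) = ⟨c.1, ∅⟩ := by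
  refine congrArg (Sigma.mk c.1) ?_
  ext i
  simp [Finset.mem_filter, consInl]

lemma card_eq (h : SameIterDeg AA BB) :
    Fintype.card A = Fintype.card B ∧ Fintype.card (Cons AA) = Fintype.card (Cons BB) := by
  have h0 := h 0
  have eA : Multiset.map (iterDeg AA 0) (Finset.univ : Finset (A ⊕ Cons AA)).val
      = Multiset.replicate (Fintype.card A) true
        + Multiset.replicate (Fintype.card (Cons AA)) false := by
    rw [univ_sum_val, Multiset.map_add, Multiset.map_map, Multiset.map_map]
    congr 1
    · rw [show ((iterDeg AA 0) ∘ Sum.inl) = (fun _ : A => (true : DegT (Label σ ar) 0)) from rfl]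
      erw [Multiset.map_const']
      congr 1
    · rw [show ((iterDeg AA 0) ∘ Sum.inr) = (fun _ : Cons AA => (false : DegT (Label σ ar) 0)) from rfl]
      erw [Multiset.map_const']
      congr 1
  have eB : Multiset.map (iterDeg BB 0) (Finset.univ : Finset (B ⊕ Cons BB)).val
      = Multiset.replicate (Fintype.card B) true
        + Multiset.replicate (Fintype.card (Cons BB)) false := by
    rw [univ_sum_val, Multiset.map_add, Multiset.map_map, Multiset.map_map]
    congr 1
    · rw [show ((iterDeg BB 0) ∘ Sum.inl) = (fun _ : B => (true : DegT (Label σ ar) 0)) from rfl]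
      erw [Multiset.map_const']
      congr 1
    · rw [show ((iterDeg BB 0) ∘ Sum.inr) = (fun _ : Cons BB => (false : DegT (Label σ ar) 0)) from rfl]
      erw [Multiset.map_const']
      congr 1
  rw [eA, eB] at h0
  constructor
  · have := congrArg (Multiset.count true) h0
    simpa [Multiset.count_replicate] using this
  · have := congrArg (Multiset.count false) h0
    simpa [Multiset.count_replicate] using this

/-- The iterated degree sequences split into the element parts and the constraint parts. -/
lemma split (h : SameIterDeg AA BB) (k : ℕ) :
    (Multiset.map (fun a : A => iterDeg AA k (.inl a)) (Finset.univ : Finset A).val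
      = Multiset.map (fun b : B => iterDeg BB k (.inl b)) (Finset.univ : Finset B).val)
    ∧ (Multiset.map (fun c : Cons AA => iterDeg AA k (.inr c))
          (Finset.univ : Finset (Cons AA)).val
      = Multiset.map (fun c : Cons BB => iterDeg BB k (.inr c))
          (Finset.univ : Finset (Cons BB)).val) := by
  obtain ⟨cA, cC⟩ := card_eq AA BB h
  have hk := h k
  rw [univ_sum_val, univ_sum_val, Multiset.map_add, Multiset.map_add,
    Multiset.map_map, Multiset.map_map, Multiset.map_map, Multiset.map_map] at hk
  set p : DegT (Label σ ar) k → Prop := fun v =>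
    (∃ a : A, iterDeg AA k (.inl a) = v) ∨ (∃ b : B, iterDeg BB k (.inl b) = v) with hp
  have fAE : Multiset.filter p
      (Multiset.map ((iterDeg AA k) ∘ Sum.inl) (Finset.univ : Finset A).val)
      = Multiset.map ((iterDeg AA k) ∘ Sum.inl) (Finset.univ : Finset A).val := by
    refine Multiset.filter_eq_self.mpr ?_
    intro v hv
    obtain ⟨a, -, rfl⟩ := Multiset.mem_map.mp hv
    exact Or.inl ⟨a, rfl⟩
  have fBE : Multiset.filter p
      (Multiset.map ((iterDeg BB k) ∘ Sum.inl) (Finset.univ : Finset B).val)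
      = Multiset.map ((iterDeg BB k) ∘ Sum.inl) (Finset.univ : Finset B).val := by
    refine Multiset.filter_eq_self.mpr ?_
    intro v hv
    obtain ⟨b, -, rfl⟩ := Multiset.mem_map.mp hv
    exact Or.inr ⟨b, rfl⟩
  have fAC : Multiset.filter p
      (Multiset.map ((iterDeg AA k) ∘ Sum.inr) (Finset.univ : Finset (Cons AA)).val) = 0 := by
    rw [Multiset.filter_eq_nil]
    intro v hv
    obtain ⟨c, -, rfl⟩ := Multiset.mem_map.mp hv
    rintro (⟨a, ha⟩ | ⟨b, hb⟩)
    · exact sep' k AA AA rfl rfl a c ha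
    · exact sep' k BB AA cA.symm cC.symm b c hb
  have fBC : Multiset.filter p
      (Multiset.map ((iterDeg BB k) ∘ Sum.inr) (Finset.univ : Finset (Cons BB)).val) = 0 := by
    rw [Multiset.filter_eq_nil]
    intro v hv
    obtain ⟨c, -, rfl⟩ := Multiset.mem_map.mp hv
    rintro (⟨a, ha⟩ | ⟨b, hb⟩)
    · exact sep' k AA BB cA cC a c ha
    · exact sep' k BB BB rfl rfl b c hb
  have hfil := congrArg (Multiset.filter p) hk
  rw [Multiset.filter_add, Multiset.filter_add, fAE, fBE, fAC, fBC, add_zero, add_zero] at hfil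
  have hE : Multiset.map (fun a : A => iterDeg AA k (.inl a)) (Finset.univ : Finset A).val
      = Multiset.map (fun b : B => iterDeg BB k (.inl b)) (Finset.univ : Finset B).val := hfil
  refine ⟨hE, ?_⟩
  rw [show (Multiset.map ((iterDeg AA k) ∘ Sum.inl) (Finset.univ : Finset A).val)
      = (Multiset.map ((iterDeg BB k) ∘ Sum.inl) (Finset.univ : Finset B).val) from hfil] at hk
  exact add_left_cancel hk


/-- Transfer function for constraint degrees. -/
def gC (k : ℕ) : DegT (Label σ ar) k → DegT (Label σ ar) k := fun v =>
  if h1 : ∃ u : Cons AA ⊕ Cons BB, compDegC AA BB k u = v then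
    iterDeg (dUnion AA BB) k (.inr (embC AA BB h1.choose))
  else degTdefault _ k

lemma gC_spec (k : ℕ) (hCC : CC AA BB k) (u : Cons AA ⊕ Cons BB) :
    gC AA BB k (compDegC AA BB k u) = iterDeg (dUnion AA BB) k (.inr (embC AA BB u)) := by
  have h1 : ∃ u', compDegC AA BB k u' = compDegC AA BB k u := ⟨u, rfl⟩
  rw [gC, dif_pos h1]
  exact hCC _ _ h1.choose_spec

/-- Transfer function for element degrees. -/
def gE (k : ℕ) : DegT (Label σ ar) k → DegT (Label σ ar) k := fun v =>
  if h1 : ∃ x : A ⊕ B, compDegE AA BB k x = v then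
    iterDeg (dUnion AA BB) k (.inl h1.choose)
  else degTdefault _ k

lemma gE_spec (k : ℕ) (hCE : CE AA BB k) (x : A ⊕ B) :
    gE AA BB k (compDegE AA BB k x) = iterDeg (dUnion AA BB) k (.inl x) := by
  have h1 : ∃ x', compDegE AA BB k x' = compDegE AA BB k x := ⟨x, rfl⟩
  rw [gE, dif_pos h1]
  exact hCE _ _ h1.choose_spec

/-- The multiset of shared (nullary) constraints of the disjoint union. -/
def Nsh : Multiset (Cons (dUnion AA BB)) :=
  (Finset.univ : Finset (Cons (dUnion AA BB))).val.filter
    (fun c => (∃ x, consInl AA BB x = c) ∧ (∃ y, consInr AA BB y = c))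

lemma consInl_inj : Function.Injective (consInl AA BB) := by
  rintro ⟨R, u, hu⟩ ⟨R', u', hu'⟩ e
  obtain ⟨e1, e2⟩ := Sigma.mk.inj_iff.mp e
  subst e1
  have e3 := congrFun (congrArg Subtype.val (eq_of_heq e2))
  refine congrArg (Sigma.mk R) (Subtype.ext (funext fun i => ?_))
  have := e3 i
  simpa using this

lemma consInr_inj : Function.Injective (consInr AA BB) := by
  rintro ⟨R, u, hu⟩ ⟨R', u', hu'⟩ e
  obtain ⟨e1, e2⟩ := Sigma.mk.inj_iff.mp e
  subst e1
  have e3 := congrFun (congrArg Subtype.val (eq_of_heq e2))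
  refine congrArg (Sigma.mk R) (Subtype.ext (funext fun i => ?_))
  have := e3 i
  simpa using this

lemma isA_or_isB (c : Cons (dUnion AA BB)) :
    (∃ x, consInl AA BB x = c) ∨ (∃ y, consInr AA BB y = c) := by
  obtain ⟨R, u, hu⟩ := c
  rcases hu with ⟨v, hv, huv⟩ | ⟨v, hv, huv⟩
  · left
    exact ⟨⟨R, v, hv⟩, by subst huv; rfl⟩
  · right
    exact ⟨⟨R, v, hv⟩, by subst huv; rfl⟩

lemma shared_lab {c : Cons (dUnion AA BB)} (hc : c ∈ Nsh AA BB) (z : A ⊕ B) :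
    lab (dUnion AA BB) z c = ⟨c.1, ∅⟩ := by
  obtain ⟨-, ⟨x, hx⟩, ⟨y, hy⟩⟩ := Multiset.mem_filter.mp hc
  subst hx
  obtain ⟨Rx, ux, hux⟩ := x
  obtain ⟨Ry, uy, huy⟩ := y
  simp only [consInl, consInr] at hy ⊢
  obtain ⟨e1, e2⟩ := Sigma.mk.inj_iff.mp hy
  subst e1
  have e3 := congrFun (congrArg Subtype.val (eq_of_heq e2))
  have hfalse : ∀ i : Fin (ar Ry), False := fun i => by simpa using e3 i
  refine congrArg (Sigma.mk _) ?_
  ext i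
  exact (hfalse i).elim

/-- Decomposition of the constraints of the disjoint union. -/
lemma decompDD :
    (Finset.univ : Finset (Cons (dUnion AA BB))).val + Nsh AA BB
      = Multiset.map (embC AA BB) (Finset.univ : Finset (Cons AA ⊕ Cons BB)).val := by
  classical
  refine Multiset.ext.mpr fun c => ?_
  rw [Multiset.count_add, univ_sum_val, Multiset.map_add, Multiset.map_map, Multiset.map_map,
    Multiset.count_add]
  have hA := count_map_univ_inj (consInl AA BB) (consInl_inj AA BB) c
  have hB := count_map_univ_inj (consInr AA BB) (consInr_inj AA BB) c
  have h1 : Multiset.count c (Finset.univ : Finset (Cons (dUnion AA BB))).val = 1 :=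
    Multiset.count_univ c
  have h2 : Multiset.count c (Nsh AA BB)
      = if (∃ x, consInl AA BB x = c) ∧ (∃ y, consInr AA BB y = c) then 1 else 0 := by
    rw [Nsh, Multiset.count_filter]
    split_ifs <;> simp_all
  have h3 : Multiset.count c (Multiset.map (embC AA BB ∘ Sum.inl)
        (Finset.univ : Finset (Cons AA)).val) = if ∃ x, consInl AA BB x = c then 1 else 0 :=
    hA
  have h4 : Multiset.count c (Multiset.map (embC AA BB ∘ Sum.inr)
        (Finset.univ : Finset (Cons BB)).val) = if ∃ y, consInr AA BB y = c then 1 else 0 :=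
    hB
  rw [h1, h2, h3, h4]
  rcases isA_or_isB AA BB c with hhc | hhc <;> by_cases h5 : ∃ x, consInl AA BB x = c <;>
    by_cases h6 : ∃ y, consInr AA BB y = c <;> simp_all


/-- The correction term coming from shared nullary constraints. -/
def NshTerm (k : ℕ) : Multiset (Label σ ar × DegT (Label σ ar) k) :=
  Multiset.map (fun c => ((⟨c.1, ∅⟩ : Label σ ar), iterDeg (dUnion AA BB) k (.inr c)))
    (Nsh AA BB)

lemma degE_decomp_l (k : ℕ) (a : A) :
    Multiset.map (fun c : Cons (dUnion AA BB) =>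
        (lab (dUnion AA BB) (Sum.inl a) c, iterDeg (dUnion AA BB) k (Sum.inr c)))
      (Finset.univ : Finset (Cons (dUnion AA BB))).val + NshTerm AA BB k
      = Multiset.map (fun c : Cons AA =>
            (lab AA a c, iterDeg (dUnion AA BB) k (.inr (consInl AA BB c))))
          (Finset.univ : Finset (Cons AA)).val
        + Multiset.map (fun c : Cons BB =>
            ((⟨c.1, ∅⟩ : Label σ ar), iterDeg (dUnion AA BB) k (.inr (consInr AA BB c))))
          (Finset.univ : Finset (Cons BB)).val := by
  have hN : NshTerm AA BB k = Multiset.map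
      (fun c => (lab (dUnion AA BB) (Sum.inl a) c, iterDeg (dUnion AA BB) k (.inr c)))
      (Nsh AA BB) := by
    rw [NshTerm]
    refine Multiset.map_congr rfl ?_
    intro c hc
    rw [shared_lab AA BB hc]
  rw [hN, ← Multiset.map_add, decompDD, Multiset.map_map]
  rw [univ_sum_val, Multiset.map_add, Multiset.map_map, Multiset.map_map]
  congr 1
  · refine Multiset.map_congr rfl ?_
    intro c _
    simp only [Function.comp_apply, embC, Sum.elim_inl]
    rw [lab_inl]
  · refine Multiset.map_congr rfl ?_
    intro c _
    simp only [Function.comp_apply, embC, Sum.elim_inr]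
    rw [lab_cross_ab]

lemma degE_decomp_r (k : ℕ) (b : B) :
    Multiset.map (fun c : Cons (dUnion AA BB) =>
        (lab (dUnion AA BB) (Sum.inr b) c, iterDeg (dUnion AA BB) k (Sum.inr c)))
      (Finset.univ : Finset (Cons (dUnion AA BB))).val + NshTerm AA BB k
      = Multiset.map (fun c : Cons AA =>
            ((⟨c.1, ∅⟩ : Label σ ar), iterDeg (dUnion AA BB) k (.inr (consInl AA BB c))))
          (Finset.univ : Finset (Cons AA)).val
        + Multiset.map (fun c : Cons BB =>
            (lab BB b c, iterDeg (dUnion AA BB) k (.inr (consInr AA BB c))))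
          (Finset.univ : Finset (Cons BB)).val := by
  have hN : NshTerm AA BB k = Multiset.map
      (fun c => (lab (dUnion AA BB) (Sum.inr b) c, iterDeg (dUnion AA BB) k (.inr c)))
      (Nsh AA BB) := by
    rw [NshTerm]
    refine Multiset.map_congr rfl ?_
    intro c hc
    rw [shared_lab AA BB hc]
  rw [hN, ← Multiset.map_add, decompDD, Multiset.map_map]
  rw [univ_sum_val, Multiset.map_add, Multiset.map_map, Multiset.map_map]
  congr 1
  · refine Multiset.map_congr rfl ?_
    intro c _
    simp only [Function.comp_apply, embC, Sum.elim_inl]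
    rw [lab_cross_ba]
  · refine Multiset.map_congr rfl ?_
    intro c _
    simp only [Function.comp_apply, embC, Sum.elim_inr]
    rw [lab_inr]

lemma degC_decomp_l (k : ℕ) (c : Cons AA) :
    Multiset.map (fun z : A ⊕ B =>
        (lab (dUnion AA BB) z (consInl AA BB c), iterDeg (dUnion AA BB) k (Sum.inl z)))
      (Finset.univ : Finset (A ⊕ B)).val
      = Multiset.map (fun a : A => (lab AA a c, iterDeg (dUnion AA BB) k (.inl (.inl a))))
          (Finset.univ : Finset A).val
        + Multiset.map (fun b : B =>
            ((⟨c.1, ∅⟩ : Label σ ar), iterDeg (dUnion AA BB) k (.inl (.inr b))))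
          (Finset.univ : Finset B).val := by
  rw [univ_sum_val, Multiset.map_add, Multiset.map_map, Multiset.map_map]
  congr 1
  · refine Multiset.map_congr rfl ?_
    intro a _
    simp only [Function.comp_apply]
    rw [lab_inl]
  · refine Multiset.map_congr rfl ?_
    intro b _
    simp only [Function.comp_apply]
    rw [lab_cross_ba]

lemma degC_decomp_r (k : ℕ) (c : Cons BB) :
    Multiset.map (fun z : A ⊕ B =>
        (lab (dUnion AA BB) z (consInr AA BB c), iterDeg (dUnion AA BB) k (Sum.inl z)))
      (Finset.univ : Finset (A ⊕ B)).val
      = Multiset.map (fun a : A =>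
            ((⟨c.1, ∅⟩ : Label σ ar), iterDeg (dUnion AA BB) k (.inl (.inl a))))
          (Finset.univ : Finset A).val
        + Multiset.map (fun b : B => (lab BB b c, iterDeg (dUnion AA BB) k (.inl (.inr b))))
          (Finset.univ : Finset B).val := by
  rw [univ_sum_val, Multiset.map_add, Multiset.map_map, Multiset.map_map]
  congr 1
  · refine Multiset.map_congr rfl ?_
    intro a _
    simp only [Function.comp_apply]
    rw [lab_cross_ab]
  · refine Multiset.map_congr rfl ?_
    intro b _
    simp only [Function.comp_apply]
    rw [lab_inr]

lemma mainE (h : SameIterDeg AA BB) (k : ℕ) (hCE : CE AA BB k) :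
    Multiset.map (fun a : A => iterDeg (dUnion AA BB) k (.inl (.inl a)))
        (Finset.univ : Finset A).val
      = Multiset.map (fun b : B => iterDeg (dUnion AA BB) k (.inl (.inr b)))
        (Finset.univ : Finset B).val := by
  have hs := (split AA BB h k).1
  have h2 := congrArg (Multiset.map (gE AA BB k)) hs
  rw [Multiset.map_map, Multiset.map_map] at h2
  calc Multiset.map (fun a : A => iterDeg (dUnion AA BB) k (.inl (.inl a)))
        (Finset.univ : Finset A).val
      = Multiset.map ((gE AA BB k) ∘ (fun a : A => iterDeg AA k (.inl a)))
        (Finset.univ : Finset A).val :=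
        Multiset.map_congr rfl (fun a _ => (gE_spec AA BB k hCE (.inl a)).symm)
    _ = Multiset.map ((gE AA BB k) ∘ (fun b : B => iterDeg BB k (.inl b)))
        (Finset.univ : Finset B).val := h2
    _ = Multiset.map (fun b : B => iterDeg (dUnion AA BB) k (.inl (.inr b)))
        (Finset.univ : Finset B).val :=
        Multiset.map_congr rfl (fun b _ => gE_spec AA BB k hCE (.inr b))

lemma mainC0 (h : SameIterDeg AA BB) (k : ℕ) (hCC : CC AA BB k) :
    Multiset.map (fun c : Cons AA => iterDeg (dUnion AA BB) k (.inr (consInl AA BB c)))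
        (Finset.univ : Finset (Cons AA)).val
      = Multiset.map (fun c : Cons BB => iterDeg (dUnion AA BB) k (.inr (consInr AA BB c)))
        (Finset.univ : Finset (Cons BB)).val := by
  have hs := (split AA BB h k).2
  have h2 := congrArg (Multiset.map (gC AA BB k)) hs
  rw [Multiset.map_map, Multiset.map_map] at h2
  calc Multiset.map (fun c : Cons AA => iterDeg (dUnion AA BB) k (.inr (consInl AA BB c)))
        (Finset.univ : Finset (Cons AA)).val
      = Multiset.map ((gC AA BB k) ∘ (fun c : Cons AA => iterDeg AA k (.inr c)))
        (Finset.univ : Finset (Cons AA)).val :=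
        Multiset.map_congr rfl (fun c _ => (gC_spec AA BB k hCC (.inl c)).symm)
    _ = Multiset.map ((gC AA BB k) ∘ (fun c : Cons BB => iterDeg BB k (.inr c)))
        (Finset.univ : Finset (Cons BB)).val := h2
    _ = Multiset.map (fun c : Cons BB => iterDeg (dUnion AA BB) k (.inr (consInr AA BB c)))
        (Finset.univ : Finset (Cons BB)).val :=
        Multiset.map_congr rfl (fun c _ => gC_spec AA BB k hCC (.inr c))

lemma mainC_gen (h : SameIterDeg AA BB) (k m' : ℕ)
    (hdet : ∀ u v : Cons AA ⊕ Cons BB,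
      compDegC AA BB (m'+1) u = compDegC AA BB (m'+1) v →
      iterDeg (dUnion AA BB) k (.inr (embC AA BB u))
        = iterDeg (dUnion AA BB) k (.inr (embC AA BB v)))
    (hA : Nonempty A) (hB : Nonempty B) :
    Multiset.map (fun c : Cons AA => (c.1, iterDeg (dUnion AA BB) k (.inr (consInl AA BB c))))
        (Finset.univ : Finset (Cons AA)).val
      = Multiset.map (fun c : Cons BB =>
          (c.1, iterDeg (dUnion AA BB) k (.inr (consInr AA BB c))))
        (Finset.univ : Finset (Cons BB)).val := by
  by_cases hCA : Nonempty (Cons AA)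
  case neg =>
    have hea : IsEmpty (Cons AA) := not_nonempty_iff.mp hCA
    have heb : IsEmpty (Cons BB) := by
      rw [← Fintype.card_eq_zero_iff] at hea ⊢
      rw [← (card_eq AA BB h).2]
      exact hea
    rw [Finset.univ_eq_empty, Finset.univ_eq_empty]
    rfl
  case pos =>
    obtain ⟨cstar⟩ := hCA
    set symval : Multiset (Label σ ar × DegT (Label σ ar) m') → σ := fun v =>
      ((v.toList.head?).map (fun p => p.1.1)).getD cstar.1 with hsymval
    have symval_eq : ∀ (v : Multiset (Label σ ar × DegT (Label σ ar) m')) (R : σ),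
        v ≠ 0 → (∀ p ∈ v, p.1.1 = R) → symval v = R := by
      intro v R hne hall
      cases hl : v.toList with
      | nil => exact absurd (Multiset.toList_eq_nil.mp hl) hne
      | cons p l =>
        have hp : p ∈ v := by
          rw [← Multiset.mem_toList, hl]
          exact List.mem_cons_self
        simp only [hsymval, hl, List.head?_cons, Option.map_some, Option.getD_some]
        exact hall p hp
    set G : DegT (Label σ ar) (m'+1) → σ × DegT (Label σ ar) k := fun v =>
      (symval v,
        if h1 : ∃ u : Cons AA ⊕ Cons BB, compDegC AA BB (m'+1) u = v then
          iterDeg (dUnion AA BB) k (.inr (embC AA BB h1.choose))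
        else degTdefault _ k) with hG
    have hGA : ∀ c : Cons AA, G (iterDeg AA (m'+1) (.inr c))
        = (c.1, iterDeg (dUnion AA BB) k (.inr (consInl AA BB c))) := by
      intro c
      have h1 : ∃ u : Cons AA ⊕ Cons BB,
          compDegC AA BB (m'+1) u = iterDeg AA (m'+1) (.inr c) := ⟨Sum.inl c, rfl⟩
      have hfst : symval (iterDeg AA (m'+1) (.inr c)) = c.1 := by
        refine symval_eq _ _ ?_ ?_
        · rw [iterDeg_succ_inr]
          simp only [ne_eq, Multiset.map_eq_zero, Finset.val_eq_zero]
          exact (Finset.univ_nonempty (α := A)).ne_empty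
        · intro p hp
          rw [iterDeg_succ_inr] at hp
          obtain ⟨a, -, rfl⟩ := Multiset.mem_map.mp hp
          rfl
      simp only [hG]
      rw [dif_pos h1]
      exact Prod.ext hfst (hdet h1.choose (Sum.inl c) h1.choose_spec)
    have hGB : ∀ c : Cons BB, G (iterDeg BB (m'+1) (.inr c))
        = (c.1, iterDeg (dUnion AA BB) k (.inr (consInr AA BB c))) := by
      intro c
      have h1 : ∃ u : Cons AA ⊕ Cons BB,
          compDegC AA BB (m'+1) u = iterDeg BB (m'+1) (.inr c) := ⟨Sum.inr c, rfl⟩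
      have hfst : symval (iterDeg BB (m'+1) (.inr c)) = c.1 := by
        refine symval_eq _ _ ?_ ?_
        · rw [iterDeg_succ_inr]
          simp only [ne_eq, Multiset.map_eq_zero, Finset.val_eq_zero]
          exact (Finset.univ_nonempty (α := B)).ne_empty
        · intro p hp
          rw [iterDeg_succ_inr] at hp
          obtain ⟨b, -, rfl⟩ := Multiset.mem_map.mp hp
          rfl
      simp only [hG]
      rw [dif_pos h1]
      exact Prod.ext hfst (hdet h1.choose (Sum.inr c) h1.choose_spec)
    have hs := (split AA BB h (m'+1)).2
    have h2 := congrArg (Multiset.map G) hs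
    rw [Multiset.map_map, Multiset.map_map] at h2
    calc Multiset.map (fun c : Cons AA =>
          (c.1, iterDeg (dUnion AA BB) k (.inr (consInl AA BB c))))
          (Finset.univ : Finset (Cons AA)).val
        = Multiset.map (G ∘ (fun c : Cons AA => iterDeg AA (m'+1) (.inr c)))
          (Finset.univ : Finset (Cons AA)).val :=
          Multiset.map_congr rfl (fun c _ => (hGA c).symm)
      _ = Multiset.map (G ∘ (fun c : Cons BB => iterDeg BB (m'+1) (.inr c)))
          (Finset.univ : Finset (Cons BB)).val := h2
      _ = Multiset.map (fun c : Cons BB =>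
            (c.1, iterDeg (dUnion AA BB) k (.inr (consInr AA BB c))))
          (Finset.univ : Finset (Cons BB)).val :=
          Multiset.map_congr rfl (fun c _ => hGB c)

lemma mainC' (h : SameIterDeg AA BB) (k : ℕ) (hCC : CC AA BB k)
    (hA : Nonempty A) (hB : Nonempty B) :
    Multiset.map (fun c : Cons AA => (c.1, iterDeg (dUnion AA BB) k (.inr (consInl AA BB c))))
        (Finset.univ : Finset (Cons AA)).val
      = Multiset.map (fun c : Cons BB =>
          (c.1, iterDeg (dUnion AA BB) k (.inr (consInr AA BB c))))
        (Finset.univ : Finset (Cons BB)).val := by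
  cases k with
  | zero => exact mainC_gen AA BB h 0 0 (fun u v _ => rfl) hA hB
  | succ k' => exact mainC_gen AA BB h (k'+1) k' hCC hA hB

lemma symb_of_deg {A' B' : Type} [Fintype A'] [Fintype B'] (S : Struct σ ar A')
    (T : Struct σ ar B') (k : ℕ) (hA' : Nonempty A') (c : Cons S) (c' : Cons T)
    (he : iterDeg S (k+1) (.inr c) = iterDeg T (k+1) (.inr c')) : c.1 = c'.1 := by
  have he' : Multiset.map (fun a : A' => (lab S a c, iterDeg S k (.inl a)))
        (Finset.univ : Finset A').val
      = Multiset.map (fun b : B' => (lab T b c', iterDeg T k (.inl b)))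
        (Finset.univ : Finset B').val := by
    rw [← iterDeg_succ_inr, ← iterDeg_succ_inr]
    exact he
  obtain ⟨a0⟩ := hA'
  have hmem : (lab S a0 c, iterDeg S k (.inl a0))
      ∈ Multiset.map (fun b : B' => (lab T b c', iterDeg T k (.inl b)))
        (Finset.univ : Finset B').val := by
    rw [← he']
    exact Multiset.mem_map_of_mem _ (Finset.mem_univ a0)
  obtain ⟨b, -, hb⟩ := Multiset.mem_map.mp hmem
  exact (congrArg (fun q => q.1.1) hb).symm

lemma ceCC (h : SameIterDeg AA BB) : ∀ k, CE AA BB k ∧ CC AA BB k := by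
  intro k
  induction k with
  | zero => exact ⟨fun x y _ => rfl, fun u v _ => rfl⟩
  | succ k IH =>
    obtain ⟨hCE, hCC⟩ := IH
    obtain ⟨cA, cC⟩ := card_eq AA BB h
    have hABne : Nonempty A → Nonempty B := by
      intro hA
      rw [← Fintype.card_pos_iff] at hA ⊢
      omega
    have hBAne : Nonempty B → Nonempty A := by
      intro hB
      rw [← Fintype.card_pos_iff] at hB ⊢
      omega
    have pushA : ∀ a : A,
        Multiset.map (Prod.map id (gC AA BB k))
          (Multiset.map (fun c : Cons AA => (lab AA a c, iterDeg AA k (.inr c)))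
            (Finset.univ : Finset (Cons AA)).val)
        = Multiset.map (fun c : Cons AA =>
            (lab AA a c, iterDeg (dUnion AA BB) k (.inr (consInl AA BB c))))
          (Finset.univ : Finset (Cons AA)).val := by
      intro a
      rw [Multiset.map_map]
      refine Multiset.map_congr rfl ?_
      intro c _
      show (lab AA a c, gC AA BB k (iterDeg AA k (.inr c))) = _
      exact congrArg (Prod.mk (lab AA a c)) (gC_spec AA BB k hCC (Sum.inl c))
    have pushB : ∀ b : B,
        Multiset.map (Prod.map id (gC AA BB k))
          (Multiset.map (fun c : Cons BB => (lab BB b c, iterDeg BB k (.inr c)))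
            (Finset.univ : Finset (Cons BB)).val)
        = Multiset.map (fun c : Cons BB =>
            (lab BB b c, iterDeg (dUnion AA BB) k (.inr (consInr AA BB c))))
          (Finset.univ : Finset (Cons BB)).val := by
      intro b
      rw [Multiset.map_map]
      refine Multiset.map_congr rfl ?_
      intro c _
      show (lab BB b c, gC AA BB k (iterDeg BB k (.inr c))) = _
      exact congrArg (Prod.mk (lab BB b c)) (gC_spec AA BB k hCC (Sum.inr c))
    have pushEA : ∀ c : Cons AA,
        Multiset.map (Prod.map id (gE AA BB k))
          (Multiset.map (fun a : A => (lab AA a c, iterDeg AA k (.inl a)))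
            (Finset.univ : Finset A).val)
        = Multiset.map (fun a : A =>
            (lab AA a c, iterDeg (dUnion AA BB) k (.inl (.inl a))))
          (Finset.univ : Finset A).val := by
      intro c
      rw [Multiset.map_map]
      refine Multiset.map_congr rfl ?_
      intro a _
      show (lab AA a c, gE AA BB k (iterDeg AA k (.inl a))) = _
      exact congrArg (Prod.mk (lab AA a c)) (gE_spec AA BB k hCE (Sum.inl a))
    have pushEB : ∀ c : Cons BB,
        Multiset.map (Prod.map id (gE AA BB k))
          (Multiset.map (fun b : B => (lab BB b c, iterDeg BB k (.inl b)))
            (Finset.univ : Finset B).val)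
        = Multiset.map (fun b : B =>
            (lab BB b c, iterDeg (dUnion AA BB) k (.inl (.inr b))))
          (Finset.univ : Finset B).val := by
      intro c
      rw [Multiset.map_map]
      refine Multiset.map_congr rfl ?_
      intro b _
      show (lab BB b c, gE AA BB k (iterDeg BB k (.inl b))) = _
      exact congrArg (Prod.mk (lab BB b c)) (gE_spec AA BB k hCE (Sum.inr b))
    constructor
    · -- CE (k+1)
      intro x y hxy
      match x, y with
      | .inl a, .inl a' =>
        have hxy' : Multiset.map (fun c : Cons AA => (lab AA a c, iterDeg AA k (.inr c)))
              (Finset.univ : Finset (Cons AA)).val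
            = Multiset.map (fun c : Cons AA => (lab AA a' c, iterDeg AA k (.inr c)))
              (Finset.univ : Finset (Cons AA)).val := by
          rw [← iterDeg_succ_inl, ← iterDeg_succ_inl]
          exact hxy
        have hmain : Multiset.map (fun c : Cons AA =>
              (lab AA a c, iterDeg (dUnion AA BB) k (.inr (consInl AA BB c))))
              (Finset.univ : Finset (Cons AA)).val
            = Multiset.map (fun c : Cons AA =>
              (lab AA a' c, iterDeg (dUnion AA BB) k (.inr (consInl AA BB c))))
              (Finset.univ : Finset (Cons AA)).val := by
          rw [← pushA a, ← pushA a', hxy']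
        have hms : Multiset.map (fun c : Cons AA =>
              (lab AA a c, iterDeg (dUnion AA BB) k (.inr (consInl AA BB c))))
              (Finset.univ : Finset (Cons AA)).val
            + Multiset.map (fun c : Cons BB =>
              ((⟨c.1, ∅⟩ : Label σ ar), iterDeg (dUnion AA BB) k (.inr (consInr AA BB c))))
              (Finset.univ : Finset (Cons BB)).val
            = Multiset.map (fun c : Cons AA =>
              (lab AA a' c, iterDeg (dUnion AA BB) k (.inr (consInl AA BB c))))
              (Finset.univ : Finset (Cons AA)).val
            + Multiset.map (fun c : Cons BB =>
              ((⟨c.1, ∅⟩ : Label σ ar), iterDeg (dUnion AA BB) k (.inr (consInr AA BB c))))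
              (Finset.univ : Finset (Cons BB)).val := by
          rw [hmain]
        rw [← degE_decomp_l, ← degE_decomp_l] at hms
        have hfin := add_right_cancel hms
        exact hfin
      | .inr b, .inr b' =>
        have hxy' : Multiset.map (fun c : Cons BB => (lab BB b c, iterDeg BB k (.inr c)))
              (Finset.univ : Finset (Cons BB)).val
            = Multiset.map (fun c : Cons BB => (lab BB b' c, iterDeg BB k (.inr c)))
              (Finset.univ : Finset (Cons BB)).val := by
          rw [← iterDeg_succ_inl, ← iterDeg_succ_inl]
          exact hxy
        have hmain : Multiset.map (fun c : Cons BB =>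
              (lab BB b c, iterDeg (dUnion AA BB) k (.inr (consInr AA BB c))))
              (Finset.univ : Finset (Cons BB)).val
            = Multiset.map (fun c : Cons BB =>
              (lab BB b' c, iterDeg (dUnion AA BB) k (.inr (consInr AA BB c))))
              (Finset.univ : Finset (Cons BB)).val := by
          rw [← pushB b, ← pushB b', hxy']
        have hms : Multiset.map (fun c : Cons AA =>
              ((⟨c.1, ∅⟩ : Label σ ar), iterDeg (dUnion AA BB) k (.inr (consInl AA BB c))))
              (Finset.univ : Finset (Cons AA)).val
            + Multiset.map (fun c : Cons BB =>
              (lab BB b c, iterDeg (dUnion AA BB) k (.inr (consInr AA BB c))))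
              (Finset.univ : Finset (Cons BB)).val
            = Multiset.map (fun c : Cons AA =>
              ((⟨c.1, ∅⟩ : Label σ ar), iterDeg (dUnion AA BB) k (.inr (consInl AA BB c))))
              (Finset.univ : Finset (Cons AA)).val
            + Multiset.map (fun c : Cons BB =>
              (lab BB b' c, iterDeg (dUnion AA BB) k (.inr (consInr AA BB c))))
              (Finset.univ : Finset (Cons BB)).val := by
          rw [hmain]
        rw [← degE_decomp_r, ← degE_decomp_r] at hms
        have hfin := add_right_cancel hms
        exact hfin
      | .inl a, .inr b =>
        have hA : Nonempty A := ⟨a⟩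
        have hB : Nonempty B := ⟨b⟩
        have hxy' : Multiset.map (fun c : Cons AA => (lab AA a c, iterDeg AA k (.inr c)))
              (Finset.univ : Finset (Cons AA)).val
            = Multiset.map (fun c : Cons BB => (lab BB b c, iterDeg BB k (.inr c)))
              (Finset.univ : Finset (Cons BB)).val := by
          rw [← iterDeg_succ_inl, ← iterDeg_succ_inl]
          exact hxy
        have hmain : Multiset.map (fun c : Cons AA =>
              (lab AA a c, iterDeg (dUnion AA BB) k (.inr (consInl AA BB c))))
              (Finset.univ : Finset (Cons AA)).val
            = Multiset.map (fun c : Cons BB =>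
              (lab BB b c, iterDeg (dUnion AA BB) k (.inr (consInr AA BB c))))
              (Finset.univ : Finset (Cons BB)).val := by
          rw [← pushA a, ← pushB b, hxy']
        have hK := congrArg (Multiset.map
            (fun p : σ × DegT (Label σ ar) k => ((⟨p.1, ∅⟩ : Label σ ar), p.2)))
          (mainC' AA BB h k hCC hA hB)
        rw [Multiset.map_map, Multiset.map_map] at hK
        simp only [Function.comp] at hK
        have hms : Multiset.map (fun c : Cons AA =>
              (lab AA a c, iterDeg (dUnion AA BB) k (.inr (consInl AA BB c))))
              (Finset.univ : Finset (Cons AA)).val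
            + Multiset.map (fun c : Cons BB =>
              ((⟨c.1, ∅⟩ : Label σ ar), iterDeg (dUnion AA BB) k (.inr (consInr AA BB c))))
              (Finset.univ : Finset (Cons BB)).val
            = Multiset.map (fun c : Cons AA =>
              ((⟨c.1, ∅⟩ : Label σ ar), iterDeg (dUnion AA BB) k (.inr (consInl AA BB c))))
              (Finset.univ : Finset (Cons AA)).val
            + Multiset.map (fun c : Cons BB =>
              (lab BB b c, iterDeg (dUnion AA BB) k (.inr (consInr AA BB c))))
              (Finset.univ : Finset (Cons BB)).val := by
          rw [hmain, hK]
          exact add_comm _ _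
        rw [← degE_decomp_l, ← degE_decomp_r] at hms
        have hfin := add_right_cancel hms
        exact hfin
      | .inr b, .inl a =>
        have hA : Nonempty A := ⟨a⟩
        have hB : Nonempty B := ⟨b⟩
        have hxy' : Multiset.map (fun c : Cons BB => (lab BB b c, iterDeg BB k (.inr c)))
              (Finset.univ : Finset (Cons BB)).val
            = Multiset.map (fun c : Cons AA => (lab AA a c, iterDeg AA k (.inr c)))
              (Finset.univ : Finset (Cons AA)).val := by
          rw [← iterDeg_succ_inl, ← iterDeg_succ_inl]
          exact hxy
        have hmain : Multiset.map (fun c : Cons BB =>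
              (lab BB b c, iterDeg (dUnion AA BB) k (.inr (consInr AA BB c))))
              (Finset.univ : Finset (Cons BB)).val
            = Multiset.map (fun c : Cons AA =>
              (lab AA a c, iterDeg (dUnion AA BB) k (.inr (consInl AA BB c))))
              (Finset.univ : Finset (Cons AA)).val := by
          rw [← pushA a, ← pushB b, hxy']
        have hK := congrArg (Multiset.map
            (fun p : σ × DegT (Label σ ar) k => ((⟨p.1, ∅⟩ : Label σ ar), p.2)))
          (mainC' AA BB h k hCC hA hB)
        rw [Multiset.map_map, Multiset.map_map] at hK
        simp only [Function.comp] at hK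
        have hms : Multiset.map (fun c : Cons AA =>
              ((⟨c.1, ∅⟩ : Label σ ar), iterDeg (dUnion AA BB) k (.inr (consInl AA BB c))))
              (Finset.univ : Finset (Cons AA)).val
            + Multiset.map (fun c : Cons BB =>
              (lab BB b c, iterDeg (dUnion AA BB) k (.inr (consInr AA BB c))))
              (Finset.univ : Finset (Cons BB)).val
            = Multiset.map (fun c : Cons AA =>
              (lab AA a c, iterDeg (dUnion AA BB) k (.inr (consInl AA BB c))))
              (Finset.univ : Finset (Cons AA)).val
            + Multiset.map (fun c : Cons BB =>
              ((⟨c.1, ∅⟩ : Label σ ar), iterDeg (dUnion AA BB) k (.inr (consInr AA BB c))))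
              (Finset.univ : Finset (Cons BB)).val := by
          rw [hmain, hK]
          exact add_comm _ _
        rw [← degE_decomp_r, ← degE_decomp_l] at hms
        have hfin := add_right_cancel hms
        exact hfin
    · -- CC (k+1)
      intro u v huv
      by_cases hA : Nonempty A
      case neg =>
        have heA : IsEmpty A := not_nonempty_iff.mp hA
        have heB : IsEmpty B := by
          rw [← Fintype.card_eq_zero_iff] at heA ⊢
          omega
        have hu : (Finset.univ : Finset (A ⊕ B)).val = 0 := by
          rw [Finset.univ_eq_empty]
          rfl
        show Multiset.map (fun z : A ⊕ B =>
            (lab (dUnion AA BB) z (embC AA BB u), iterDeg (dUnion AA BB) k (Sum.inl z)))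
            (Finset.univ : Finset (A ⊕ B)).val = Multiset.map (fun z : A ⊕ B =>
            (lab (dUnion AA BB) z (embC AA BB v), iterDeg (dUnion AA BB) k (Sum.inl z)))
            (Finset.univ : Finset (A ⊕ B)).val
        rw [hu]
        rfl
      case pos =>
        have hB : Nonempty B := hABne hA
        have hKE := mainE AA BB h k hCE
        match u, v with
        | .inl c, .inl c' =>
          have huv' : iterDeg AA (k+1) (.inr c) = iterDeg AA (k+1) (.inr c') := huv
          have hsym : c.1 = c'.1 := symb_of_deg AA AA k hA c c' huv'
          have huv'' : Multiset.map (fun a : A => (lab AA a c, iterDeg AA k (.inl a)))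
                (Finset.univ : Finset A).val
              = Multiset.map (fun a : A => (lab AA a c', iterDeg AA k (.inl a)))
                (Finset.univ : Finset A).val := by
            rw [← iterDeg_succ_inr, ← iterDeg_succ_inr]
            exact huv'
          have hmain : Multiset.map (fun a : A =>
                (lab AA a c, iterDeg (dUnion AA BB) k (.inl (.inl a))))
                (Finset.univ : Finset A).val
              = Multiset.map (fun a : A =>
                (lab AA a c', iterDeg (dUnion AA BB) k (.inl (.inl a))))
                (Finset.univ : Finset A).val := by
            rw [← pushEA c, ← pushEA c', huv'']
          have hms : Multiset.map (fun a : A =>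
                (lab AA a c, iterDeg (dUnion AA BB) k (.inl (.inl a))))
                (Finset.univ : Finset A).val
              + Multiset.map (fun b : B =>
                ((⟨c.1, ∅⟩ : Label σ ar), iterDeg (dUnion AA BB) k (.inl (.inr b))))
                (Finset.univ : Finset B).val
              = Multiset.map (fun a : A =>
                (lab AA a c', iterDeg (dUnion AA BB) k (.inl (.inl a))))
                (Finset.univ : Finset A).val
              + Multiset.map (fun b : B =>
                ((⟨c'.1, ∅⟩ : Label σ ar), iterDeg (dUnion AA BB) k (.inl (.inr b))))
                (Finset.univ : Finset B).val := by
            rw [hmain, hsym]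
          rw [← degC_decomp_l, ← degC_decomp_l] at hms
          exact hms
        | .inr c, .inr c' =>
          have huv' : iterDeg BB (k+1) (.inr c) = iterDeg BB (k+1) (.inr c') := huv
          have hsym : c.1 = c'.1 := symb_of_deg BB BB k hB c c' huv'
          have huv'' : Multiset.map (fun b : B => (lab BB b c, iterDeg BB k (.inl b)))
                (Finset.univ : Finset B).val
              = Multiset.map (fun b : B => (lab BB b c', iterDeg BB k (.inl b)))
                (Finset.univ : Finset B).val := by
            rw [← iterDeg_succ_inr, ← iterDeg_succ_inr]
            exact huv'
          have hmain : Multiset.map (fun b : B =>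
                (lab BB b c, iterDeg (dUnion AA BB) k (.inl (.inr b))))
                (Finset.univ : Finset B).val
              = Multiset.map (fun b : B =>
                (lab BB b c', iterDeg (dUnion AA BB) k (.inl (.inr b))))
                (Finset.univ : Finset B).val := by
            rw [← pushEB c, ← pushEB c', huv'']
          have hms : Multiset.map (fun a : A =>
                ((⟨c.1, ∅⟩ : Label σ ar), iterDeg (dUnion AA BB) k (.inl (.inl a))))
                (Finset.univ : Finset A).val
              + Multiset.map (fun b : B =>
                (lab BB b c, iterDeg (dUnion AA BB) k (.inl (.inr b))))
                (Finset.univ : Finset B).val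
              = Multiset.map (fun a : A =>
                ((⟨c'.1, ∅⟩ : Label σ ar), iterDeg (dUnion AA BB) k (.inl (.inl a))))
                (Finset.univ : Finset A).val
              + Multiset.map (fun b : B =>
                (lab BB b c', iterDeg (dUnion AA BB) k (.inl (.inr b))))
                (Finset.univ : Finset B).val := by
            rw [hmain, hsym]
          rw [← degC_decomp_r, ← degC_decomp_r] at hms
          exact hms
        | .inl c, .inr c' =>
          have huv' : iterDeg AA (k+1) (.inr c) = iterDeg BB (k+1) (.inr c') := huv
          have hsym : c.1 = c'.1 := symb_of_deg AA BB k hA c c' huv'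
          have huv'' : Multiset.map (fun a : A => (lab AA a c, iterDeg AA k (.inl a)))
                (Finset.univ : Finset A).val
              = Multiset.map (fun b : B => (lab BB b c', iterDeg BB k (.inl b)))
                (Finset.univ : Finset B).val := by
            rw [← iterDeg_succ_inr, ← iterDeg_succ_inr]
            exact huv'
          have hmain : Multiset.map (fun a : A =>
                (lab AA a c, iterDeg (dUnion AA BB) k (.inl (.inl a))))
                (Finset.univ : Finset A).val
              = Multiset.map (fun b : B =>
                (lab BB b c', iterDeg (dUnion AA BB) k (.inl (.inr b))))
                (Finset.univ : Finset B).val := by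
            rw [← pushEA c, ← pushEB c', huv'']
          have hcross : Multiset.map (fun b : B =>
                ((⟨c.1, ∅⟩ : Label σ ar), iterDeg (dUnion AA BB) k (.inl (.inr b))))
                (Finset.univ : Finset B).val
              = Multiset.map (fun a : A =>
                ((⟨c'.1, ∅⟩ : Label σ ar), iterDeg (dUnion AA BB) k (.inl (.inl a))))
                (Finset.univ : Finset A).val := by
            rw [hsym]
            have := congrArg (Multiset.map
              (fun d : DegT (Label σ ar) k => ((⟨c'.1, ∅⟩ : Label σ ar), d))) hKE
            rw [Multiset.map_map, Multiset.map_map] at this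
            simp only [Function.comp] at this
            exact this.symm
          have hms : Multiset.map (fun a : A =>
                (lab AA a c, iterDeg (dUnion AA BB) k (.inl (.inl a))))
                (Finset.univ : Finset A).val
              + Multiset.map (fun b : B =>
                ((⟨c.1, ∅⟩ : Label σ ar), iterDeg (dUnion AA BB) k (.inl (.inr b))))
                (Finset.univ : Finset B).val
              = Multiset.map (fun a : A =>
                ((⟨c'.1, ∅⟩ : Label σ ar), iterDeg (dUnion AA BB) k (.inl (.inl a))))
                (Finset.univ : Finset A).val
              + Multiset.map (fun b : B =>
                (lab BB b c', iterDeg (dUnion AA BB) k (.inl (.inr b))))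
                (Finset.univ : Finset B).val := by
            rw [hmain, hcross]
            exact add_comm _ _
          rw [← degC_decomp_l, ← degC_decomp_r] at hms
          exact hms
        | .inr c, .inl c' =>
          have huv' : iterDeg BB (k+1) (.inr c) = iterDeg AA (k+1) (.inr c') := huv
          have hsym : c.1 = c'.1 := symb_of_deg BB AA k hB c c' huv'
          have huv'' : Multiset.map (fun b : B => (lab BB b c, iterDeg BB k (.inl b)))
                (Finset.univ : Finset B).val
              = Multiset.map (fun a : A => (lab AA a c', iterDeg AA k (.inl a)))
                (Finset.univ : Finset A).val := by
            rw [← iterDeg_succ_inr, ← iterDeg_succ_inr]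
            exact huv'
          have hmain : Multiset.map (fun b : B =>
                (lab BB b c, iterDeg (dUnion AA BB) k (.inl (.inr b))))
                (Finset.univ : Finset B).val
              = Multiset.map (fun a : A =>
                (lab AA a c', iterDeg (dUnion AA BB) k (.inl (.inl a))))
                (Finset.univ : Finset A).val := by
            rw [← pushEA c', ← pushEB c, huv'']
          have hcross : Multiset.map (fun a : A =>
                ((⟨c.1, ∅⟩ : Label σ ar), iterDeg (dUnion AA BB) k (.inl (.inl a))))
                (Finset.univ : Finset A).val
              = Multiset.map (fun b : B =>
                ((⟨c'.1, ∅⟩ : Label σ ar), iterDeg (dUnion AA BB) k (.inl (.inr b))))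
                (Finset.univ : Finset B).val := by
            rw [hsym]
            have := congrArg (Multiset.map
              (fun d : DegT (Label σ ar) k => ((⟨c'.1, ∅⟩ : Label σ ar), d))) hKE
            rw [Multiset.map_map, Multiset.map_map] at this
            simp only [Function.comp] at this
            exact this
          have hms : Multiset.map (fun a : A =>
                ((⟨c.1, ∅⟩ : Label σ ar), iterDeg (dUnion AA BB) k (.inl (.inl a))))
                (Finset.univ : Finset A).val
              + Multiset.map (fun b : B =>
                (lab BB b c, iterDeg (dUnion AA BB) k (.inl (.inr b))))
                (Finset.univ : Finset B).val
              = Multiset.map (fun a : A =>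
                (lab AA a c', iterDeg (dUnion AA BB) k (.inl (.inl a))))
                (Finset.univ : Finset A).val
              + Multiset.map (fun b : B =>
                ((⟨c'.1, ∅⟩ : Label σ ar), iterDeg (dUnion AA BB) k (.inl (.inr b))))
                (Finset.univ : Finset B).val := by
            rw [hmain, hcross]
            exact add_comm _ _
          rw [← degC_decomp_r, ← degC_decomp_l] at hms
          exact hms

lemma stabStep (k : ℕ)
    (hs : ∀ x y : (A ⊕ B) ⊕ Cons (dUnion AA BB),
      iterDeg (dUnion AA BB) k x = iterDeg (dUnion AA BB) k y →
      iterDeg (dUnion AA BB) (k+1) x = iterDeg (dUnion AA BB) (k+1) y) :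
    ∀ x y : (A ⊕ B) ⊕ Cons (dUnion AA BB),
      iterDeg (dUnion AA BB) (k+1) x = iterDeg (dUnion AA BB) (k+1) y →
      iterDeg (dUnion AA BB) (k+2) x = iterDeg (dUnion AA BB) (k+2) y := by
  set s : DegT (Label σ ar) k → DegT (Label σ ar) (k+1) := fun v =>
    if h1 : ∃ z : (A ⊕ B) ⊕ Cons (dUnion AA BB), iterDeg (dUnion AA BB) k z = v then
      iterDeg (dUnion AA BB) (k+1) h1.choose
    else degTdefault _ (k+1) with hsdef
  have hspec : ∀ z, s (iterDeg (dUnion AA BB) k z) = iterDeg (dUnion AA BB) (k+1) z := by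
    intro z
    have h1 : ∃ z', iterDeg (dUnion AA BB) k z' = iterDeg (dUnion AA BB) k z := ⟨z, rfl⟩
    simp only [hsdef]
    rw [dif_pos h1]
    exact hs _ _ h1.choose_spec
  have hmap : ∀ z, iterDeg (dUnion AA BB) (k+2) z
      = Multiset.map (Prod.map id s) (iterDeg (dUnion AA BB) (k+1) z) := by
    intro z
    match z with
    | .inl x =>
      rw [iterDeg_succ_inl, iterDeg_succ_inl, Multiset.map_map]
      refine (Multiset.map_congr rfl ?_).symm
      intro c _
      show Prod.map id s (lab (dUnion AA BB) x c, iterDeg (dUnion AA BB) k (.inr c)) = _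
      simp only [Prod.map, id]
      rw [hspec (Sum.inr c)]
    | .inr c =>
      rw [iterDeg_succ_inr, iterDeg_succ_inr, Multiset.map_map]
      refine (Multiset.map_congr rfl ?_).symm
      intro z' _
      show Prod.map id s (lab (dUnion AA BB) z' c, iterDeg (dUnion AA BB) k (.inl z')) = _
      simp only [Prod.map, id]
      rw [hspec (Sum.inl z')]
  intro x y hxy
  rw [hmap x, hmap y, hxy]

lemma exists_stable :
    ∃ k0 : ℕ, ∀ x y : (A ⊕ B) ⊕ Cons (dUnion AA BB),
      iterDeg (dUnion AA BB) k0 x = iterDeg (dUnion AA BB) k0 y ↔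
      ∀ m, iterDeg (dUnion AA BB) m x = iterDeg (dUnion AA BB) m y := by
  classical
  set F : ℕ → Finset (((A ⊕ B) ⊕ Cons (dUnion AA BB)) × ((A ⊕ B) ⊕ Cons (dUnion AA BB))) :=
    fun k => Finset.univ.filter
      (fun p => iterDeg (dUnion AA BB) k p.1 = iterDeg (dUnion AA BB) k p.2) with hF
  have hrefDD : ∀ (k : ℕ) (x y : (A ⊕ B) ⊕ Cons (dUnion AA BB)),
      iterDeg (dUnion AA BB) (k+1) x = iterDeg (dUnion AA BB) (k+1) y →
      iterDeg (dUnion AA BB) k x = iterDeg (dUnion AA BB) k y :=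
    fun k x y => ref k (dUnion AA BB) (dUnion AA BB) rfl rfl x y
  have hsub : ∀ k, F (k+1) ⊆ F k := by
    intro k p hp
    simp only [hF, Finset.mem_filter] at hp ⊢
    exact ⟨hp.1, hrefDD k _ _ hp.2⟩
  have hex : ∃ k, F k = F (k+1) := by
    by_contra hcon
    push_neg at hcon
    have hlt : ∀ k, (F (k+1)).card < (F k).card := by
      intro k
      refine Finset.card_lt_card ?_
      exact lt_of_le_of_ne (hsub k) (Ne.symm (hcon k))
    have hle : ∀ k, (F k).card + k ≤ (F 0).card := by
      intro k
      induction k with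
      | zero => omega
      | succ k IH =>
        have := hlt k
        omega
    have := hle ((F 0).card + 1)
    omega
  obtain ⟨k0, hk0⟩ := hex
  have hstep0 : ∀ x y : (A ⊕ B) ⊕ Cons (dUnion AA BB),
      iterDeg (dUnion AA BB) k0 x = iterDeg (dUnion AA BB) k0 y →
      iterDeg (dUnion AA BB) (k0+1) x = iterDeg (dUnion AA BB) (k0+1) y := by
    intro x y hxy
    have hp : (x, y) ∈ F k0 := by
      simp only [hF, Finset.mem_filter]
      exact ⟨Finset.mem_univ _, hxy⟩
    rw [hk0] at hp
    simp only [hF, Finset.mem_filter] at hp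
    exact hp.2
  have hstepAll : ∀ m, k0 ≤ m → ∀ x y : (A ⊕ B) ⊕ Cons (dUnion AA BB),
      iterDeg (dUnion AA BB) m x = iterDeg (dUnion AA BB) m y →
      iterDeg (dUnion AA BB) (m+1) x = iterDeg (dUnion AA BB) (m+1) y := by
    intro m hm
    induction m, hm using Nat.le_induction with
    | base => exact hstep0
    | succ m hm IH => exact stabStep AA BB m IH
  have hdown : ∀ (d j : ℕ) (x y : (A ⊕ B) ⊕ Cons (dUnion AA BB)),
      iterDeg (dUnion AA BB) (j+d) x = iterDeg (dUnion AA BB) (j+d) y →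
      iterDeg (dUnion AA BB) j x = iterDeg (dUnion AA BB) j y := by
    intro d
    induction d with
    | zero => exact fun j x y hx => hx
    | succ d IH => exact fun j x y hx => IH j x y (hrefDD (j+d) x y hx)
  refine ⟨k0, fun x y => ⟨fun hk m => ?_, fun hall => hall k0⟩⟩
  rcases le_or_gt k0 m with hm | hm
  · have hup : ∀ m', k0 ≤ m' →
        iterDeg (dUnion AA BB) m' x = iterDeg (dUnion AA BB) m' y := by
      intro m' hm'
      induction m', hm' using Nat.le_induction with
      | base => exact hk
      | succ m' hm' IH => exact hstepAll m' hm' x y IH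
    exact hup m hm
  · have hmk : m + (k0 - m) = k0 := Nat.add_sub_cancel' hm.le
    refine hdown (k0 - m) m x y ?_
    rw [hmk]
    exact hk

lemma cardSubtype {γ : Type} [Fintype γ] (q : γ → Prop) :
    Nat.card {g // q g} = Multiset.card ((Finset.univ : Finset γ).val.filter q) := by
  classical
  rw [Nat.card_eq_fintype_card, Fintype.card_subtype, Finset.card_def, Finset.filter_val]

lemma nat_card_eq_count {γ β : Type} [Fintype γ] (f : γ → β) (v : β) (q : γ → Prop)
    (hq : ∀ g, q g ↔ v = f g) :
    Nat.card {g // q g} = Multiset.count v (Multiset.map f (Finset.univ : Finset γ).val) := by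
  classical
  rw [Multiset.count_map, cardSubtype]
  exact congrArg Multiset.card (Multiset.filter_congr (fun g _ => hq g))

lemma masterE (k0 : ℕ) (x y : A ⊕ B)
    (hxy : iterDeg (dUnion AA BB) (k0+1) (.inl x) = iterDeg (dUnion AA BB) (k0+1) (.inl y))
    (P : Label σ ar × DegT (Label σ ar) k0 → Prop) :
    Nat.card {c : Cons (dUnion AA BB) //
        P (lab (dUnion AA BB) x c, iterDeg (dUnion AA BB) k0 (.inr c))}
      = Nat.card {c : Cons (dUnion AA BB) //
        P (lab (dUnion AA BB) y c, iterDeg (dUnion AA BB) k0 (.inr c))} := by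
  classical
  have e : ∀ z : A ⊕ B, Nat.card {c : Cons (dUnion AA BB) //
        P (lab (dUnion AA BB) z c, iterDeg (dUnion AA BB) k0 (.inr c))}
      = Multiset.card (Multiset.filter P
          (Multiset.map (fun c : Cons (dUnion AA BB) =>
            (lab (dUnion AA BB) z c, iterDeg (dUnion AA BB) k0 (.inr c)))
            (Finset.univ : Finset (Cons (dUnion AA BB))).val)) := by
    intro z
    rw [cardSubtype, Multiset.filter_map, Multiset.card_map]
    exact congrArg Multiset.card (Multiset.filter_congr fun c _ => Iff.rfl)
  have hxy' : Multiset.map (fun c : Cons (dUnion AA BB) =>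
        (lab (dUnion AA BB) x c, iterDeg (dUnion AA BB) k0 (.inr c)))
        (Finset.univ : Finset (Cons (dUnion AA BB))).val
      = Multiset.map (fun c : Cons (dUnion AA BB) =>
        (lab (dUnion AA BB) y c, iterDeg (dUnion AA BB) k0 (.inr c)))
        (Finset.univ : Finset (Cons (dUnion AA BB))).val := by
    rw [← iterDeg_succ_inl, ← iterDeg_succ_inl]
    exact hxy
  rw [e x, e y, hxy']

lemma masterC (k0 : ℕ) (γ γ' : Cons (dUnion AA BB))
    (hgg : iterDeg (dUnion AA BB) (k0+1) (.inr γ) = iterDeg (dUnion AA BB) (k0+1) (.inr γ'))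
    (P : Label σ ar × DegT (Label σ ar) k0 → Prop) :
    Nat.card {z : A ⊕ B //
        P (lab (dUnion AA BB) z γ, iterDeg (dUnion AA BB) k0 (.inl z))}
      = Nat.card {z : A ⊕ B //
        P (lab (dUnion AA BB) z γ', iterDeg (dUnion AA BB) k0 (.inl z))} := by
  classical
  have e : ∀ δ : Cons (dUnion AA BB), Nat.card {z : A ⊕ B //
        P (lab (dUnion AA BB) z δ, iterDeg (dUnion AA BB) k0 (.inl z))}
      = Multiset.card (Multiset.filter P
          (Multiset.map (fun z : A ⊕ B =>
            (lab (dUnion AA BB) z δ, iterDeg (dUnion AA BB) k0 (.inl z)))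
            (Finset.univ : Finset (A ⊕ B)).val)) := by
    intro δ
    rw [cardSubtype, Multiset.filter_map, Multiset.card_map]
    exact congrArg Multiset.card (Multiset.filter_congr fun z _ => Iff.rfl)
  have hxy' : Multiset.map (fun z : A ⊕ B =>
        (lab (dUnion AA BB) z γ, iterDeg (dUnion AA BB) k0 (.inl z)))
        (Finset.univ : Finset (A ⊕ B)).val
      = Multiset.map (fun z : A ⊕ B =>
        (lab (dUnion AA BB) z γ', iterDeg (dUnion AA BB) k0 (.inl z)))
        (Finset.univ : Finset (A ⊕ B)).val := by
    rw [← iterDeg_succ_inr, ← iterDeg_succ_inr]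
    exact hgg
  rw [e γ, e γ', hxy']

lemma classSize (h : SameIterDeg AA BB) (k0 : ℕ)
    (hst : ∀ x y : (A ⊕ B) ⊕ Cons (dUnion AA BB),
      iterDeg (dUnion AA BB) k0 x = iterDeg (dUnion AA BB) k0 y ↔
      ∀ m, iterDeg (dUnion AA BB) m x = iterDeg (dUnion AA BB) m y)
    (i : (k : ℕ) → DegT (Label σ ar) k) :
    Nat.card {a : A // degPclass AA BB (.inl a) = i}
      = Nat.card {b : B // degPclass AA BB (.inr b) = i} := by
  by_cases hi : ∃ x0 : A ⊕ B, degPclass AA BB x0 = i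
  · obtain ⟨x0, hx0⟩ := hi
    have hiff : ∀ x : A ⊕ B, degPclass AA BB x = i ↔
        iterDeg (dUnion AA BB) k0 (.inl x) = iterDeg (dUnion AA BB) k0 (.inl x0) := by
      intro x
      constructor
      · intro e
        exact congrFun (e.trans hx0.symm) k0
      · intro e
        rw [← hx0]
        exact funext fun m => (hst _ _).mp e m
    rw [nat_card_eq_count (fun a : A => iterDeg (dUnion AA BB) k0 (.inl (.inl a)))
        (iterDeg (dUnion AA BB) k0 (.inl x0)) _
        (fun a => (hiff (Sum.inl a)).trans eq_comm),
      nat_card_eq_count (fun b : B => iterDeg (dUnion AA BB) k0 (.inl (.inr b)))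
        (iterDeg (dUnion AA BB) k0 (.inl x0)) _
        (fun b => (hiff (Sum.inr b)).trans eq_comm),
      mainE AA BB h k0 (ceCC AA BB h k0).1]
  · have e1 : IsEmpty {a : A // degPclass AA BB (.inl a) = i} :=
      ⟨fun ⟨a, ha⟩ => hi ⟨.inl a, ha⟩⟩
    have e2 : IsEmpty {b : B // degPclass AA BB (.inr b) = i} :=
      ⟨fun ⟨b, hb⟩ => hi ⟨.inr b, hb⟩⟩
    rw [Nat.card_of_isEmpty, Nat.card_of_isEmpty]

lemma consSize (h : SameIterDeg AA BB) (k0 : ℕ)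
    (hst : ∀ x y : (A ⊕ B) ⊕ Cons (dUnion AA BB),
      iterDeg (dUnion AA BB) k0 x = iterDeg (dUnion AA BB) k0 y ↔
      ∀ m, iterDeg (dUnion AA BB) m x = iterDeg (dUnion AA BB) m y)
    (j : (k : ℕ) → DegT (Label σ ar) k) :
    Nat.card {c : Cons AA // degQclass AA BB (consInl AA BB c) = j}
      = Nat.card {c : Cons BB // degQclass AA BB (consInr AA BB c) = j} := by
  by_cases hj : ∃ γ0 : Cons (dUnion AA BB), degQclass AA BB γ0 = j
  · obtain ⟨γ0, hγ0⟩ := hj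
    have hiff : ∀ γ : Cons (dUnion AA BB), degQclass AA BB γ = j ↔
        iterDeg (dUnion AA BB) k0 (.inr γ) = iterDeg (dUnion AA BB) k0 (.inr γ0) := by
      intro γ
      constructor
      · intro e
        exact congrFun (e.trans hγ0.symm) k0
      · intro e
        rw [← hγ0]
        exact funext fun m => (hst _ _).mp e m
    rw [nat_card_eq_count
        (fun c : Cons AA => iterDeg (dUnion AA BB) k0 (.inr (consInl AA BB c)))
        (iterDeg (dUnion AA BB) k0 (.inr γ0)) _
        (fun c => (hiff (consInl AA BB c)).trans eq_comm),
      nat_card_eq_count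
        (fun c : Cons BB => iterDeg (dUnion AA BB) k0 (.inr (consInr AA BB c)))
        (iterDeg (dUnion AA BB) k0 (.inr γ0)) _
        (fun c => (hiff (consInr AA BB c)).trans eq_comm),
      mainC0 AA BB h k0 (ceCC AA BB h k0).2]
  · have e1 : IsEmpty {c : Cons AA // degQclass AA BB (consInl AA BB c) = j} :=
      ⟨fun ⟨c, hc⟩ => hj ⟨consInl AA BB c, hc⟩⟩
    have e2 : IsEmpty {c : Cons BB // degQclass AA BB (consInr AA BB c) = j} :=
      ⟨fun ⟨c, hc⟩ => hj ⟨consInr AA BB c, hc⟩⟩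
    rw [Nat.card_of_isEmpty, Nat.card_of_isEmpty]

lemma part1 (k0 : ℕ)
    (hst : ∀ x y : (A ⊕ B) ⊕ Cons (dUnion AA BB),
      iterDeg (dUnion AA BB) k0 x = iterDeg (dUnion AA BB) k0 y ↔
      ∀ m, iterDeg (dUnion AA BB) m x = iterDeg (dUnion AA BB) m y) :
    ∃ cpar dpar,
      IsEquitable (dUnion AA BB) (degPclass AA BB) (degQclass AA BB) cpar dpar := by
  classical
  refine ⟨fun ℓ i j => if h1 : ∃ x : A ⊕ B, degPclass AA BB x = i then
      Nat.card {c : Cons (dUnion AA BB) //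
        degQclass AA BB c = j ∧ lab (dUnion AA BB) h1.choose c = ℓ} else 0,
    fun ℓ j i => if h1 : ∃ γ : Cons (dUnion AA BB), degQclass AA BB γ = j then
      Nat.card {z : A ⊕ B //
        degPclass AA BB z = i ∧ lab (dUnion AA BB) z h1.choose = ℓ} else 0,
    ?_, ?_⟩
  · intro x ℓ j
    have h1 : ∃ x', degPclass AA BB x' = degPclass AA BB x := ⟨x, rfl⟩
    dsimp only
    rw [dif_pos h1]
    have hx' : degPclass AA BB h1.choose = degPclass AA BB x := h1.choose_spec
    by_cases hj : ∃ γ0 : Cons (dUnion AA BB), degQclass AA BB γ0 = j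
    · obtain ⟨γ0, hγ0⟩ := hj
      have hQiff : ∀ γ : Cons (dUnion AA BB), degQclass AA BB γ = j ↔
          iterDeg (dUnion AA BB) k0 (.inr γ) = iterDeg (dUnion AA BB) k0 (.inr γ0) := by
        intro γ
        constructor
        · intro e
          exact congrFun (e.trans hγ0.symm) k0
        · intro e
          rw [← hγ0]
          exact funext fun m => (hst _ _).mp e m
      have hxx' : iterDeg (dUnion AA BB) (k0+1) (.inl x)
          = iterDeg (dUnion AA BB) (k0+1) (.inl h1.choose) :=
        congrFun hx'.symm (k0+1)
      have hm := masterE AA BB k0 x h1.choose hxx'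
        (fun p => p.2 = iterDeg (dUnion AA BB) k0 (.inr γ0) ∧ p.1 = ℓ)
      calc Nat.card {c : Cons (dUnion AA BB) //
            degQclass AA BB c = j ∧ lab (dUnion AA BB) x c = ℓ}
          = Nat.card {c : Cons (dUnion AA BB) //
              iterDeg (dUnion AA BB) k0 (.inr c) = iterDeg (dUnion AA BB) k0 (.inr γ0)
                ∧ lab (dUnion AA BB) x c = ℓ} :=
            Nat.card_congr (Equiv.subtypeEquivRight (fun c => by rw [hQiff c]))
        _ = Nat.card {c : Cons (dUnion AA BB) //
              iterDeg (dUnion AA BB) k0 (.inr c) = iterDeg (dUnion AA BB) k0 (.inr γ0)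
                ∧ lab (dUnion AA BB) h1.choose c = ℓ} := by
            have := hm
            simp only [and_comm] at this ⊢
            exact this
        _ = Nat.card {c : Cons (dUnion AA BB) //
              degQclass AA BB c = j ∧ lab (dUnion AA BB) h1.choose c = ℓ} :=
            Nat.card_congr (Equiv.subtypeEquivRight (fun c => by rw [hQiff c]))
    · have e1 : IsEmpty {c : Cons (dUnion AA BB) //
          degQclass AA BB c = j ∧ lab (dUnion AA BB) x c = ℓ} :=
        ⟨fun ⟨c, hc⟩ => hj ⟨c, hc.1⟩⟩
      have e2 : IsEmpty {c : Cons (dUnion AA BB) //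
          degQclass AA BB c = j ∧ lab (dUnion AA BB) h1.choose c = ℓ} :=
        ⟨fun ⟨c, hc⟩ => hj ⟨c, hc.1⟩⟩
      rw [Nat.card_of_isEmpty, Nat.card_of_isEmpty]
  · intro γ ℓ i
    have h1 : ∃ γ', degQclass AA BB γ' = degQclass AA BB γ := ⟨γ, rfl⟩
    dsimp only
    rw [dif_pos h1]
    have hγ' : degQclass AA BB h1.choose = degQclass AA BB γ := h1.choose_spec
    by_cases hi : ∃ x0 : A ⊕ B, degPclass AA BB x0 = i
    · obtain ⟨x0, hx0⟩ := hi
      have hPiff : ∀ z : A ⊕ B, degPclass AA BB z = i ↔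
          iterDeg (dUnion AA BB) k0 (.inl z) = iterDeg (dUnion AA BB) k0 (.inl x0) := by
        intro z
        constructor
        · intro e
          exact congrFun (e.trans hx0.symm) k0
        · intro e
          rw [← hx0]
          exact funext fun m => (hst _ _).mp e m
      have hgg : iterDeg (dUnion AA BB) (k0+1) (.inr γ)
          = iterDeg (dUnion AA BB) (k0+1) (.inr h1.choose) :=
        congrFun hγ'.symm (k0+1)
      have hm := masterC AA BB k0 γ h1.choose hgg
        (fun p => p.2 = iterDeg (dUnion AA BB) k0 (.inl x0) ∧ p.1 = ℓ)
      calc Nat.card {z : A ⊕ B //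
            degPclass AA BB z = i ∧ lab (dUnion AA BB) z γ = ℓ}
          = Nat.card {z : A ⊕ B //
              iterDeg (dUnion AA BB) k0 (.inl z) = iterDeg (dUnion AA BB) k0 (.inl x0)
                ∧ lab (dUnion AA BB) z γ = ℓ} :=
            Nat.card_congr (Equiv.subtypeEquivRight (fun z => by rw [hPiff z]))
        _ = Nat.card {z : A ⊕ B //
              iterDeg (dUnion AA BB) k0 (.inl z) = iterDeg (dUnion AA BB) k0 (.inl x0)
                ∧ lab (dUnion AA BB) z h1.choose = ℓ} := by
            have := hm
            simp only [and_comm] at this ⊢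
            exact this
        _ = Nat.card {z : A ⊕ B //
              degPclass AA BB z = i ∧ lab (dUnion AA BB) z h1.choose = ℓ} :=
            Nat.card_congr (Equiv.subtypeEquivRight (fun z => by rw [hPiff z]))
    · have e1 : IsEmpty {z : A ⊕ B //
          degPclass AA BB z = i ∧ lab (dUnion AA BB) z γ = ℓ} :=
        ⟨fun ⟨z, hz⟩ => hi ⟨z, hz.1⟩⟩
      have e2 : IsEmpty {z : A ⊕ B //
          degPclass AA BB z = i ∧ lab (dUnion AA BB) z h1.choose = ℓ} :=
        ⟨fun ⟨z, hz⟩ => hi ⟨z, hz.1⟩⟩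
      rw [Nat.card_of_isEmpty, Nat.card_of_isEmpty]

lemma lab_fst {A' : Type} (S : Struct σ ar A') (a : A') (c : Cons S) :
    (lab S a c).1 = c.1 := rfl

lemma lab_empty_iff {A' : Type} (S : Struct σ ar A') (a : A') (c : Cons S) (R : σ) :
    lab S a c = ⟨R, (∅ : Finset (Fin (ar R)))⟩ ↔ c.1 = R ∧ ∀ s, c.2.1 s ≠ a := by
  obtain ⟨R', u, hu⟩ := c
  constructor
  · intro e
    have e1 : R' = R := congrArg Sigma.fst e
    subst e1
    refine ⟨rfl, ?_⟩
    have e2 : (Finset.univ.filter fun i => u i = a) = (∅ : Finset (Fin (ar R'))) :=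
      eq_of_heq (Sigma.mk.inj_iff.mp e).2
    intro s hs
    have hmem : s ∈ Finset.univ.filter fun i => u i = a :=
      Finset.mem_filter.mpr ⟨Finset.mem_univ s, hs⟩
    rw [e2] at hmem
    exact absurd hmem (Finset.notMem_empty s)
  · rintro ⟨rfl, hall⟩
    refine congrArg (Sigma.mk R') ?_
    exact Finset.filter_eq_empty_iff.mpr (fun {s} _ => hall s)

lemma lab_nonempty_iff {A' : Type} (S : Struct σ ar A') (a : A') (c : Cons S) :
    ((lab S a c).2).Nonempty ↔ ∃ s, c.2.1 s = a := by
  constructor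
  · rintro ⟨s, hs⟩
    exact ⟨s, (Finset.mem_filter.mp hs).2⟩
  · rintro ⟨s, hs⟩
    exact ⟨s, Finset.mem_filter.mpr ⟨Finset.mem_univ s, hs⟩⟩

lemma nat_card_split {γ : Type} [Fintype γ] (P Q : γ → Prop) :
    Nat.card {g // P g} = Nat.card {g // P g ∧ Q g} + Nat.card {g // P g ∧ ¬ Q g} := by
  classical
  rw [Nat.card_eq_fintype_card, Nat.card_eq_fintype_card, Nat.card_eq_fintype_card,
    Fintype.card_subtype, Fintype.card_subtype, Fintype.card_subtype,
    ← Finset.filter_filter, ← Finset.filter_filter]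
  exact (Finset.card_filter_add_card_filter_not
    (s := Finset.univ.filter P) (p := Q)).symm

lemma liftA (a : A) (j : (k : ℕ) → DegT (Label σ ar) k) (Θ : Label σ ar → Prop)
    (hΘ : ∀ ℓ', Θ ℓ' → (ℓ'.2).Nonempty) :
    Nat.card {c : Cons AA // degQclass AA BB (consInl AA BB c) = j ∧ Θ (lab AA a c)}
      = Nat.card {γ : Cons (dUnion AA BB) //
          degQclass AA BB γ = j ∧ Θ (lab (dUnion AA BB) (.inl a) γ)} := by
  refine Nat.card_eq_of_bijective
    (fun c => ⟨consInl AA BB c.1, c.2.1, by rw [lab_inl]; exact c.2.2⟩) ⟨?_, ?_⟩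
  · rintro ⟨c, hc⟩ ⟨c', hc'⟩ e
    exact Subtype.ext (consInl_inj AA BB (congrArg Subtype.val e))
  · rintro ⟨⟨R, u, hu⟩, h1, h2⟩
    have hne : ∃ s, u s = Sum.inl a :=
      (lab_nonempty_iff (dUnion AA BB) (Sum.inl a) ⟨R, u, hu⟩).mp (hΘ _ h2)
    have hu' := hu
    rcases hu' with ⟨v, hv, huv⟩ | ⟨v, hv, huv⟩
    · have hc : consInl AA BB ⟨R, ⟨v, hv⟩⟩ = ⟨R, ⟨u, hu⟩⟩ := by
        subst huv
        rfl
      refine ⟨⟨⟨R, ⟨v, hv⟩⟩, ?_, ?_⟩, ?_⟩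
      · rw [hc]
        exact h1
      · have h2' := h2
        rw [← hc] at h2'; have h2' := (congrArg Θ (lab_inl AA BB a ⟨R, ⟨v, hv⟩⟩)).mp h2'
        exact h2'
      · exact Subtype.ext hc
    · exfalso
      obtain ⟨s, hs⟩ := hne
      rw [huv] at hs
      cases hs

lemma liftB (b : B) (j : (k : ℕ) → DegT (Label σ ar) k) (Θ : Label σ ar → Prop)
    (hΘ : ∀ ℓ', Θ ℓ' → (ℓ'.2).Nonempty) :
    Nat.card {c : Cons BB // degQclass AA BB (consInr AA BB c) = j ∧ Θ (lab BB b c)}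
      = Nat.card {γ : Cons (dUnion AA BB) //
          degQclass AA BB γ = j ∧ Θ (lab (dUnion AA BB) (.inr b) γ)} := by
  refine Nat.card_eq_of_bijective
    (fun c => ⟨consInr AA BB c.1, c.2.1, by rw [lab_inr]; exact c.2.2⟩) ⟨?_, ?_⟩
  · rintro ⟨c, hc⟩ ⟨c', hc'⟩ e
    exact Subtype.ext (consInr_inj AA BB (congrArg Subtype.val e))
  · rintro ⟨⟨R, u, hu⟩, h1, h2⟩
    have hne : ∃ s, u s = Sum.inr b :=
      (lab_nonempty_iff (dUnion AA BB) (Sum.inr b) ⟨R, u, hu⟩).mp (hΘ _ h2)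
    have hu' := hu
    rcases hu' with ⟨v, hv, huv⟩ | ⟨v, hv, huv⟩
    · exfalso
      obtain ⟨s, hs⟩ := hne
      rw [huv] at hs
      cases hs
    · have hc : consInr AA BB ⟨R, ⟨v, hv⟩⟩ = ⟨R, ⟨u, hu⟩⟩ := by
        subst huv
        rfl
      refine ⟨⟨⟨R, ⟨v, hv⟩⟩, ?_, ?_⟩, ?_⟩
      · rw [hc]
        exact h1
      · have h2' := h2
        rw [← hc] at h2'; have h2' := (congrArg Θ (lab_inr AA BB b ⟨R, ⟨v, hv⟩⟩)).mp h2'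
        exact h2'
      · exact Subtype.ext hc

lemma liftCA (c : Cons AA) (i : (k : ℕ) → DegT (Label σ ar) k) (Θ : Label σ ar → Prop)
    (hΘ : ∀ ℓ', Θ ℓ' → (ℓ'.2).Nonempty) :
    Nat.card {a : A // degPclass AA BB (.inl a) = i ∧ Θ (lab AA a c)}
      = Nat.card {z : A ⊕ B //
          degPclass AA BB z = i ∧ Θ (lab (dUnion AA BB) z (consInl AA BB c))} := by
  refine Nat.card_eq_of_bijective
    (fun a => ⟨Sum.inl a.1, a.2.1, by rw [lab_inl]; exact a.2.2⟩) ⟨?_, ?_⟩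
  · rintro ⟨a, ha⟩ ⟨a', ha'⟩ e
    exact Subtype.ext (Sum.inl_injective (congrArg Subtype.val e))
  · rintro ⟨z, h1, h2⟩
    match z with
    | .inl a =>
      refine ⟨⟨a, h1, ?_⟩, rfl⟩
      have h2' := h2
      rw [lab_inl] at h2'
      exact h2'
    | .inr b =>
      exfalso
      have hne : ∃ s, (consInl AA BB c).2.1 s = Sum.inr b :=
        (lab_nonempty_iff (dUnion AA BB) (Sum.inr b) (consInl AA BB c)).mp (hΘ _ h2)
      obtain ⟨s, hs⟩ := hne
      cases hs

lemma liftCB (c : Cons BB) (i : (k : ℕ) → DegT (Label σ ar) k) (Θ : Label σ ar → Prop)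
    (hΘ : ∀ ℓ', Θ ℓ' → (ℓ'.2).Nonempty) :
    Nat.card {b : B // degPclass AA BB (.inr b) = i ∧ Θ (lab BB b c)}
      = Nat.card {z : A ⊕ B //
          degPclass AA BB z = i ∧ Θ (lab (dUnion AA BB) z (consInr AA BB c))} := by
  refine Nat.card_eq_of_bijective
    (fun b => ⟨Sum.inr b.1, b.2.1, by rw [lab_inr]; exact b.2.2⟩) ⟨?_, ?_⟩
  · rintro ⟨b, hb⟩ ⟨b', hb'⟩ e
    exact Subtype.ext (Sum.inr_injective (congrArg Subtype.val e))
  · rintro ⟨z, h1, h2⟩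
    match z with
    | .inr b =>
      refine ⟨⟨b, h1, ?_⟩, rfl⟩
      have h2' := h2
      rw [lab_inr] at h2'
      exact h2'
    | .inl a =>
      exfalso
      have hne : ∃ s, (consInr AA BB c).2.1 s = Sum.inl a :=
        (lab_nonempty_iff (dUnion AA BB) (Sum.inl a) (consInr AA BB c)).mp (hΘ _ h2)
      obtain ⟨s, hs⟩ := hne
      cases hs

/-- The within-component count for elements. -/
def cntE : A ⊕ B → Label σ ar → ((k : ℕ) → DegT (Label σ ar) k) → ℕ := fun x ℓ j =>
  match x with
  | .inl a => Nat.card {c : Cons AA //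
      degQclass AA BB (consInl AA BB c) = j ∧ lab AA a c = ℓ}
  | .inr b => Nat.card {c : Cons BB //
      degQclass AA BB (consInr AA BB c) = j ∧ lab BB b c = ℓ}

/-- The within-component count for constraints. -/
def cntC : Cons AA ⊕ Cons BB → Label σ ar → ((k : ℕ) → DegT (Label σ ar) k) → ℕ :=
  fun u ℓ i =>
  match u with
  | .inl c => Nat.card {a : A // degPclass AA BB (.inl a) = i ∧ lab AA a c = ℓ}
  | .inr c => Nat.card {b : B // degPclass AA BB (.inr b) = i ∧ lab BB b c = ℓ}

lemma Ncount (h : SameIterDeg AA BB) (k0 : ℕ)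
    (hst : ∀ x y : (A ⊕ B) ⊕ Cons (dUnion AA BB),
      iterDeg (dUnion AA BB) k0 x = iterDeg (dUnion AA BB) k0 y ↔
      ∀ m, iterDeg (dUnion AA BB) m x = iterDeg (dUnion AA BB) m y)
    (hA : Nonempty A) (hB : Nonempty B) (R : σ) (j : (k : ℕ) → DegT (Label σ ar) k)
    (γ0 : Cons (dUnion AA BB)) (hγ0 : degQclass AA BB γ0 = j) :
    Nat.card {c : Cons AA // degQclass AA BB (consInl AA BB c) = j ∧ c.1 = R}
      = Nat.card {c : Cons BB // degQclass AA BB (consInr AA BB c) = j ∧ c.1 = R} := by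
  have hQiff : ∀ γ : Cons (dUnion AA BB), degQclass AA BB γ = j ↔
      iterDeg (dUnion AA BB) k0 (.inr γ) = iterDeg (dUnion AA BB) k0 (.inr γ0) := by
    intro γ
    constructor
    · intro e
      exact congrFun (e.trans hγ0.symm) k0
    · intro e
      rw [← hγ0]
      exact funext fun m => (hst _ _).mp e m
  rw [nat_card_eq_count
      (fun c : Cons AA => (c.1, iterDeg (dUnion AA BB) k0 (.inr (consInl AA BB c))))
      (R, iterDeg (dUnion AA BB) k0 (.inr γ0)) _
      (fun c => by
        rw [hQiff (consInl AA BB c), Prod.ext_iff]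
        constructor
        · rintro ⟨h1, h2⟩
          exact ⟨h2.symm, h1.symm⟩
        · rintro ⟨h1, h2⟩
          exact ⟨h2.symm, h1.symm⟩),
    nat_card_eq_count
      (fun c : Cons BB => (c.1, iterDeg (dUnion AA BB) k0 (.inr (consInr AA BB c))))
      (R, iterDeg (dUnion AA BB) k0 (.inr γ0)) _
      (fun c => by
        rw [hQiff (consInr AA BB c), Prod.ext_iff]
        constructor
        · rintro ⟨h1, h2⟩
          exact ⟨h2.symm, h1.symm⟩
        · rintro ⟨h1, h2⟩
          exact ⟨h2.symm, h1.symm⟩),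
    mainC' AA BB h k0 (ceCC AA BB h k0).2 hA hB]

lemma cntE_indep (h : SameIterDeg AA BB) (k0 : ℕ)
    (hst : ∀ x y : (A ⊕ B) ⊕ Cons (dUnion AA BB),
      iterDeg (dUnion AA BB) k0 x = iterDeg (dUnion AA BB) k0 y ↔
      ∀ m, iterDeg (dUnion AA BB) m x = iterDeg (dUnion AA BB) m y)
    (x y : A ⊕ B) (hxy : degPclass AA BB x = degPclass AA BB y)
    (ℓ : Label σ ar) (j : (k : ℕ) → DegT (Label σ ar) k) :
    cntE AA BB x ℓ j = cntE AA BB y ℓ j := by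
  classical
  obtain ⟨R, S⟩ := ℓ
  by_cases hj : ∃ γ0 : Cons (dUnion AA BB), degQclass AA BB γ0 = j
  case neg =>
    have hz : ∀ z : A ⊕ B, cntE AA BB z ⟨R, S⟩ j = 0 := by
      intro z
      match z with
      | .inl a =>
        haveI : IsEmpty {c : Cons AA //
            degQclass AA BB (consInl AA BB c) = j ∧ lab AA a c = ⟨R, S⟩} :=
          ⟨fun ⟨c, hc⟩ => hj ⟨consInl AA BB c, hc.1⟩⟩
        exact Nat.card_of_isEmpty
      | .inr b =>
        haveI : IsEmpty {c : Cons BB //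
            degQclass AA BB (consInr AA BB c) = j ∧ lab BB b c = ⟨R, S⟩} :=
          ⟨fun ⟨c, hc⟩ => hj ⟨consInr AA BB c, hc.1⟩⟩
        exact Nat.card_of_isEmpty
    rw [hz x, hz y]
  case pos =>
    obtain ⟨γ0, hγ0⟩ := hj
    have hQiff : ∀ γ : Cons (dUnion AA BB), degQclass AA BB γ = j ↔
        iterDeg (dUnion AA BB) k0 (.inr γ) = iterDeg (dUnion AA BB) k0 (.inr γ0) := by
      intro γ
      constructor
      · intro e
        exact congrFun (e.trans hγ0.symm) k0
      · intro e
        rw [← hγ0]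
        exact funext fun m => (hst _ _).mp e m
    have hxy1 : iterDeg (dUnion AA BB) (k0+1) (.inl x)
        = iterDeg (dUnion AA BB) (k0+1) (.inl y) := congrFun hxy (k0+1)
    obtain ⟨cA, cC⟩ := card_eq AA BB h
    have hAB : Nonempty A ∧ Nonempty B := by
      rw [← Fintype.card_pos_iff, ← Fintype.card_pos_iff]
      match x with
      | .inl a =>
        have : Nonempty A := ⟨a⟩
        rw [← Fintype.card_pos_iff] at this
        omega
      | .inr b =>
        have : Nonempty B := ⟨b⟩
        rw [← Fintype.card_pos_iff] at this
        omega
    obtain ⟨hA, hB⟩ := hAB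
    have dInv : ∀ Θ : Label σ ar → Prop,
        Nat.card {γ : Cons (dUnion AA BB) //
            degQclass AA BB γ = j ∧ Θ (lab (dUnion AA BB) x γ)}
          = Nat.card {γ : Cons (dUnion AA BB) //
            degQclass AA BB γ = j ∧ Θ (lab (dUnion AA BB) y γ)} := by
      intro Θ
      have hm := masterE AA BB k0 x y hxy1
        (fun p => p.2 = iterDeg (dUnion AA BB) k0 (.inr γ0) ∧ Θ p.1)
      calc Nat.card {γ : Cons (dUnion AA BB) //
            degQclass AA BB γ = j ∧ Θ (lab (dUnion AA BB) x γ)}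
          = Nat.card {γ : Cons (dUnion AA BB) //
              iterDeg (dUnion AA BB) k0 (.inr γ) = iterDeg (dUnion AA BB) k0 (.inr γ0)
                ∧ Θ (lab (dUnion AA BB) x γ)} :=
            Nat.card_congr (Equiv.subtypeEquivRight (fun γ => by rw [hQiff γ]))
        _ = Nat.card {γ : Cons (dUnion AA BB) //
              iterDeg (dUnion AA BB) k0 (.inr γ) = iterDeg (dUnion AA BB) k0 (.inr γ0)
                ∧ Θ (lab (dUnion AA BB) y γ)} := hm
        _ = Nat.card {γ : Cons (dUnion AA BB) //
              degQclass AA BB γ = j ∧ Θ (lab (dUnion AA BB) y γ)} :=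
            Nat.card_congr (Equiv.subtypeEquivRight (fun γ => by rw [hQiff γ]))
    by_cases hS : S = ∅
    case neg =>
      have hSne : S.Nonempty := Finset.nonempty_iff_ne_empty.mpr hS
      have hΘ : ∀ ℓ' : Label σ ar, ℓ' = ⟨R, S⟩ → (ℓ'.2).Nonempty := by
        rintro ℓ' rfl
        exact hSne
      have ez : ∀ z : A ⊕ B, cntE AA BB z ⟨R, S⟩ j
          = Nat.card {γ : Cons (dUnion AA BB) //
              degQclass AA BB γ = j ∧ lab (dUnion AA BB) z γ = ⟨R, S⟩} := by
        intro z
        match z with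
        | .inl a => exact liftA AA BB a j (· = ⟨R, S⟩) hΘ
        | .inr b => exact liftB AA BB b j (· = ⟨R, S⟩) hΘ
      rw [ez x, ez y]
      exact dInv (· = ⟨R, S⟩)
    case pos =>
      subst hS
      set Θ₂ : Label σ ar → Prop := fun ℓ' => ℓ'.1 = R ∧ (ℓ'.2).Nonempty with hΘ₂
      have hΘ₂ne : ∀ ℓ', Θ₂ ℓ' → (ℓ'.2).Nonempty := fun ℓ' hl => hl.2
      have hdecA : ∀ a : A,
          Nat.card {c : Cons AA // degQclass AA BB (consInl AA BB c) = j ∧ c.1 = R}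
            = cntE AA BB (.inl a) ⟨R, ∅⟩ j
              + Nat.card {c : Cons AA //
                  degQclass AA BB (consInl AA BB c) = j ∧ Θ₂ (lab AA a c)} := by
        intro a
        rw [nat_card_split (fun c : Cons AA =>
            degQclass AA BB (consInl AA BB c) = j ∧ c.1 = R)
          (fun c => ∃ s, c.2.1 s = a)]
        rw [add_comm]
        congr 1
        · refine Nat.card_congr (Equiv.subtypeEquivRight (fun c => ?_))
          rw [lab_empty_iff]
          constructor
          · rintro ⟨⟨h1, h2⟩, h3⟩
            exact ⟨h1, h2, fun s hs => h3 ⟨s, hs⟩⟩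
          · rintro ⟨h1, h2, h3⟩
            exact ⟨⟨h1, h2⟩, fun ⟨s, hs⟩ => h3 s hs⟩
        · refine Nat.card_congr (Equiv.subtypeEquivRight (fun c => ?_))
          simp only [hΘ₂]
          rw [lab_nonempty_iff]
          constructor
          · rintro ⟨⟨h1, h2⟩, h3⟩
            exact ⟨h1, h2, h3⟩
          · rintro ⟨h1, h2, h3⟩
            exact ⟨⟨h1, h2⟩, h3⟩
      have hdecB : ∀ b : B,
          Nat.card {c : Cons BB // degQclass AA BB (consInr AA BB c) = j ∧ c.1 = R}
            = cntE AA BB (.inr b) ⟨R, ∅⟩ j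
              + Nat.card {c : Cons BB //
                  degQclass AA BB (consInr AA BB c) = j ∧ Θ₂ (lab BB b c)} := by
        intro b
        rw [nat_card_split (fun c : Cons BB =>
            degQclass AA BB (consInr AA BB c) = j ∧ c.1 = R)
          (fun c => ∃ s, c.2.1 s = b)]
        rw [add_comm]
        congr 1
        · refine Nat.card_congr (Equiv.subtypeEquivRight (fun c => ?_))
          rw [lab_empty_iff]
          constructor
          · rintro ⟨⟨h1, h2⟩, h3⟩
            exact ⟨h1, h2, fun s hs => h3 ⟨s, hs⟩⟩
          · rintro ⟨h1, h2, h3⟩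
            exact ⟨⟨h1, h2⟩, fun ⟨s, hs⟩ => h3 s hs⟩
        · refine Nat.card_congr (Equiv.subtypeEquivRight (fun c => ?_))
          simp only [hΘ₂]
          rw [lab_nonempty_iff]
          constructor
          · rintro ⟨⟨h1, h2⟩, h3⟩
            exact ⟨h1, h2, h3⟩
          · rintro ⟨h1, h2, h3⟩
            exact ⟨⟨h1, h2⟩, h3⟩
      have hliftT : ∀ z : A ⊕ B,
          (match z with
            | .inl a => Nat.card {c : Cons AA //
                degQclass AA BB (consInl AA BB c) = j ∧ Θ₂ (lab AA a c)}
            | .inr b => Nat.card {c : Cons BB //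
                degQclass AA BB (consInr AA BB c) = j ∧ Θ₂ (lab BB b c)})
          = Nat.card {γ : Cons (dUnion AA BB) //
              degQclass AA BB γ = j ∧ Θ₂ (lab (dUnion AA BB) z γ)} := by
        intro z
        match z with
        | .inl a => exact liftA AA BB a j Θ₂ hΘ₂ne
        | .inr b => exact liftB AA BB b j Θ₂ hΘ₂ne
      have hN := Ncount AA BB h k0 hst hA hB R j γ0 hγ0
      have hHD := dInv Θ₂
      match x, y with
      | .inl a, .inl a' =>
        have e1 := hdecA a
        have e2 := hdecA a'
        have l1 := hliftT (.inl a)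
        have l2 := hliftT (.inl a')
        simp only at l1 l2
        omega
      | .inl a, .inr b =>
        have e1 := hdecA a
        have e2 := hdecB b
        have l1 := hliftT (.inl a)
        have l2 := hliftT (.inr b)
        simp only at l1 l2
        omega
      | .inr b, .inl a =>
        have e1 := hdecB b
        have e2 := hdecA a
        have l1 := hliftT (.inr b)
        have l2 := hliftT (.inl a)
        simp only at l1 l2
        omega
      | .inr b, .inr b' =>
        have e1 := hdecB b
        have e2 := hdecB b'
        have l1 := hliftT (.inr b)
        have l2 := hliftT (.inr b')
        simp only at l1 l2
        omega

lemma cntC_indep (h : SameIterDeg AA BB) (k0 : ℕ)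
    (hst : ∀ x y : (A ⊕ B) ⊕ Cons (dUnion AA BB),
      iterDeg (dUnion AA BB) k0 x = iterDeg (dUnion AA BB) k0 y ↔
      ∀ m, iterDeg (dUnion AA BB) m x = iterDeg (dUnion AA BB) m y)
    (u v : Cons AA ⊕ Cons BB)
    (huv : degQclass AA BB (embC AA BB u) = degQclass AA BB (embC AA BB v))
    (ℓ : Label σ ar) (i : (k : ℕ) → DegT (Label σ ar) k) :
    cntC AA BB u ℓ i = cntC AA BB v ℓ i := by
  classical
  obtain ⟨R, S⟩ := ℓ
  obtain ⟨cA, cC⟩ := card_eq AA BB h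
  by_cases hA : Nonempty A
  case neg =>
    haveI heA : IsEmpty A := not_nonempty_iff.mp hA
    haveI heB : IsEmpty B := by
      rw [← Fintype.card_eq_zero_iff] at heA ⊢
      omega
    have hz : ∀ w : Cons AA ⊕ Cons BB, cntC AA BB w ⟨R, S⟩ i = 0 := by
      intro w
      match w with
      | .inl c => exact Nat.card_of_isEmpty
      | .inr c => exact Nat.card_of_isEmpty
    rw [hz u, hz v]
  case pos =>
    have hB : Nonempty B := by
      rw [← Fintype.card_pos_iff] at hA ⊢
      omega
    by_cases hi : ∃ x0 : A ⊕ B, degPclass AA BB x0 = i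
    case neg =>
      have hz : ∀ w : Cons AA ⊕ Cons BB, cntC AA BB w ⟨R, S⟩ i = 0 := by
        intro w
        match w with
        | .inl c =>
          haveI : IsEmpty {a : A // degPclass AA BB (.inl a) = i ∧ lab AA a c = ⟨R, S⟩} :=
            ⟨fun ⟨a, ha⟩ => hi ⟨.inl a, ha.1⟩⟩
          exact Nat.card_of_isEmpty
        | .inr c =>
          haveI : IsEmpty {b : B // degPclass AA BB (.inr b) = i ∧ lab BB b c = ⟨R, S⟩} :=
            ⟨fun ⟨b, hb⟩ => hi ⟨.inr b, hb.1⟩⟩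
          exact Nat.card_of_isEmpty
      rw [hz u, hz v]
    case pos =>
      obtain ⟨x0, hx0⟩ := hi
      have hPiff : ∀ z : A ⊕ B, degPclass AA BB z = i ↔
          iterDeg (dUnion AA BB) k0 (.inl z) = iterDeg (dUnion AA BB) k0 (.inl x0) := by
        intro z
        constructor
        · intro e
          exact congrFun (e.trans hx0.symm) k0
        · intro e
          rw [← hx0]
          exact funext fun m => (hst _ _).mp e m
      have huv1 : iterDeg (dUnion AA BB) (k0+1) (.inr (embC AA BB u))
          = iterDeg (dUnion AA BB) (k0+1) (.inr (embC AA BB v)) := congrFun huv (k0+1)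
      have hsym : (embC AA BB u).1 = (embC AA BB v).1 :=
        symb_of_deg (dUnion AA BB) (dUnion AA BB) k0 ⟨Sum.inl hA.some⟩ _ _ huv1
      have dInvC : ∀ Θ : Label σ ar → Prop,
          Nat.card {z : A ⊕ B //
              degPclass AA BB z = i ∧ Θ (lab (dUnion AA BB) z (embC AA BB u))}
            = Nat.card {z : A ⊕ B //
              degPclass AA BB z = i ∧ Θ (lab (dUnion AA BB) z (embC AA BB v))} := by
        intro Θ
        have hm := masterC AA BB k0 (embC AA BB u) (embC AA BB v) huv1
          (fun p => p.2 = iterDeg (dUnion AA BB) k0 (.inl x0) ∧ Θ p.1)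
        calc Nat.card {z : A ⊕ B //
              degPclass AA BB z = i ∧ Θ (lab (dUnion AA BB) z (embC AA BB u))}
            = Nat.card {z : A ⊕ B //
                iterDeg (dUnion AA BB) k0 (.inl z) = iterDeg (dUnion AA BB) k0 (.inl x0)
                  ∧ Θ (lab (dUnion AA BB) z (embC AA BB u))} :=
              Nat.card_congr (Equiv.subtypeEquivRight (fun z => by rw [hPiff z]))
          _ = Nat.card {z : A ⊕ B //
                iterDeg (dUnion AA BB) k0 (.inl z) = iterDeg (dUnion AA BB) k0 (.inl x0)
                  ∧ Θ (lab (dUnion AA BB) z (embC AA BB v))} := hm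
          _ = Nat.card {z : A ⊕ B //
                degPclass AA BB z = i ∧ Θ (lab (dUnion AA BB) z (embC AA BB v))} :=
              Nat.card_congr (Equiv.subtypeEquivRight (fun z => by rw [hPiff z]))
      by_cases hS : S = ∅
      case neg =>
        have hSne : S.Nonempty := Finset.nonempty_iff_ne_empty.mpr hS
        have hΘ : ∀ ℓ' : Label σ ar, ℓ' = ⟨R, S⟩ → (ℓ'.2).Nonempty := by
          rintro ℓ' rfl
          exact hSne
        have ez : ∀ w : Cons AA ⊕ Cons BB, cntC AA BB w ⟨R, S⟩ i
            = Nat.card {z : A ⊕ B //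
                degPclass AA BB z = i ∧ lab (dUnion AA BB) z (embC AA BB w) = ⟨R, S⟩} := by
          intro w
          match w with
          | .inl c => exact liftCA AA BB c i (· = ⟨R, S⟩) hΘ
          | .inr c => exact liftCB AA BB c i (· = ⟨R, S⟩) hΘ
        rw [ez u, ez v]
        exact dInvC (· = ⟨R, S⟩)
      case pos =>
        subst hS
        set Θ₂ : Label σ ar → Prop := fun ℓ' => ℓ'.1 = R ∧ (ℓ'.2).Nonempty with hΘ₂
        have hΘ₂ne : ∀ ℓ', Θ₂ ℓ' → (ℓ'.2).Nonempty := fun ℓ' hl => hl.2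
        have hdecCA : ∀ c : Cons AA,
            Nat.card {a : A // degPclass AA BB (.inl a) = i ∧ c.1 = R}
              = cntC AA BB (.inl c) ⟨R, ∅⟩ i
                + Nat.card {a : A //
                    degPclass AA BB (.inl a) = i ∧ Θ₂ (lab AA a c)} := by
          intro c
          rw [nat_card_split (fun a : A => degPclass AA BB (.inl a) = i ∧ c.1 = R)
            (fun a => ∃ s, c.2.1 s = a)]
          rw [add_comm]
          congr 1
          · refine Nat.card_congr (Equiv.subtypeEquivRight (fun a => ?_))
            rw [lab_empty_iff]
            constructor
            · rintro ⟨⟨h1, h2⟩, h3⟩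
              exact ⟨h1, h2, fun s hs => h3 ⟨s, hs⟩⟩
            · rintro ⟨h1, h2, h3⟩
              exact ⟨⟨h1, h2⟩, fun ⟨s, hs⟩ => h3 s hs⟩
          · refine Nat.card_congr (Equiv.subtypeEquivRight (fun a => ?_))
            simp only [hΘ₂]
            rw [lab_nonempty_iff]
            constructor
            · rintro ⟨⟨h1, h2⟩, h3⟩
              exact ⟨h1, h2, h3⟩
            · rintro ⟨h1, h2, h3⟩
              exact ⟨⟨h1, h2⟩, h3⟩
        have hdecCB : ∀ c : Cons BB,
            Nat.card {b : B // degPclass AA BB (.inr b) = i ∧ c.1 = R}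
              = cntC AA BB (.inr c) ⟨R, ∅⟩ i
                + Nat.card {b : B //
                    degPclass AA BB (.inr b) = i ∧ Θ₂ (lab BB b c)} := by
          intro c
          rw [nat_card_split (fun b : B => degPclass AA BB (.inr b) = i ∧ c.1 = R)
            (fun b => ∃ s, c.2.1 s = b)]
          rw [add_comm]
          congr 1
          · refine Nat.card_congr (Equiv.subtypeEquivRight (fun b => ?_))
            rw [lab_empty_iff]
            constructor
            · rintro ⟨⟨h1, h2⟩, h3⟩
              exact ⟨h1, h2, fun s hs => h3 ⟨s, hs⟩⟩
            · rintro ⟨h1, h2, h3⟩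
              exact ⟨⟨h1, h2⟩, fun ⟨s, hs⟩ => h3 s hs⟩
          · refine Nat.card_congr (Equiv.subtypeEquivRight (fun b => ?_))
            simp only [hΘ₂]
            rw [lab_nonempty_iff]
            constructor
            · rintro ⟨⟨h1, h2⟩, h3⟩
              exact ⟨h1, h2, h3⟩
            · rintro ⟨h1, h2, h3⟩
              exact ⟨⟨h1, h2⟩, h3⟩
        have hliftT : ∀ w : Cons AA ⊕ Cons BB,
            (match w with
              | .inl c => Nat.card {a : A //
                  degPclass AA BB (.inl a) = i ∧ Θ₂ (lab AA a c)}
              | .inr c => Nat.card {b : B //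
                  degPclass AA BB (.inr b) = i ∧ Θ₂ (lab BB b c)})
            = Nat.card {z : A ⊕ B //
                degPclass AA BB z = i ∧ Θ₂ (lab (dUnion AA BB) z (embC AA BB w))} := by
          intro w
          match w with
          | .inl c => exact liftCA AA BB c i Θ₂ hΘ₂ne
          | .inr c => exact liftCB AA BB c i Θ₂ hΘ₂ne
        have hCS := classSize AA BB h k0 hst i
        have hTA : ∀ c : Cons AA,
            Nat.card {a : A // degPclass AA BB (.inl a) = i ∧ c.1 = R}
              = if c.1 = R then Nat.card {a : A // degPclass AA BB (.inl a) = i}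
                else 0 := by
          intro c
          split_ifs with hc
          · exact Nat.card_congr (Equiv.subtypeEquivRight (fun a => and_iff_left hc))
          · haveI : IsEmpty {a : A // degPclass AA BB (.inl a) = i ∧ c.1 = R} :=
              ⟨fun ⟨a, ha⟩ => hc ha.2⟩
            exact Nat.card_of_isEmpty
        have hTB : ∀ c : Cons BB,
            Nat.card {b : B // degPclass AA BB (.inr b) = i ∧ c.1 = R}
              = if c.1 = R then Nat.card {b : B // degPclass AA BB (.inr b) = i}
                else 0 := by
          intro c
          split_ifs with hc
          · exact Nat.card_congr (Equiv.subtypeEquivRight (fun b => and_iff_left hc))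
          · haveI : IsEmpty {b : B // degPclass AA BB (.inr b) = i ∧ c.1 = R} :=
              ⟨fun ⟨b, hb⟩ => hc hb.2⟩
            exact Nat.card_of_isEmpty
        have hHD := dInvC Θ₂
        match u, v with
        | .inl c, .inl c' =>
          have hsym' : c.1 = c'.1 := hsym
          have e1 := hdecCA c
          have e2 := hdecCA c'
          have l1 := hliftT (.inl c)
          have l2 := hliftT (.inl c')
          simp only at l1 l2
          have t1 := hTA c
          have t2 := hTA c'
          have hT : (if c.1 = R then Nat.card {a : A // degPclass AA BB (.inl a) = i}
              else 0) = (if c'.1 = R then Nat.card {a : A // degPclass AA BB (.inl a) = i}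
              else 0) := by rw [hsym']
          omega
        | .inl c, .inr c' =>
          have hsym' : c.1 = c'.1 := hsym
          have e1 := hdecCA c
          have e2 := hdecCB c'
          have l1 := hliftT (.inl c)
          have l2 := hliftT (.inr c')
          simp only at l1 l2
          have t1 := hTA c
          have t2 := hTB c'
          have hT : (if c.1 = R then Nat.card {a : A // degPclass AA BB (.inl a) = i}
              else 0) = (if c'.1 = R then Nat.card {b : B // degPclass AA BB (.inr b) = i}
              else 0) := by rw [hsym', hCS]
          omega
        | .inr c, .inl c' =>
          have hsym' : c.1 = c'.1 := hsym
          have e1 := hdecCB c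
          have e2 := hdecCA c'
          have l1 := hliftT (.inr c)
          have l2 := hliftT (.inl c')
          simp only at l1 l2
          have t1 := hTB c
          have t2 := hTA c'
          have hT : (if c.1 = R then Nat.card {b : B // degPclass AA BB (.inr b) = i}
              else 0) = (if c'.1 = R then Nat.card {a : A // degPclass AA BB (.inl a) = i}
              else 0) := by rw [hsym', hCS]
          omega
        | .inr c, .inr c' =>
          have hsym' : c.1 = c'.1 := hsym
          have e1 := hdecCB c
          have e2 := hdecCB c'
          have l1 := hliftT (.inr c)
          have l2 := hliftT (.inr c')
          simp only at l1 l2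
          have t1 := hTB c
          have t2 := hTB c'
          have hT : (if c.1 = R then Nat.card {b : B // degPclass AA BB (.inr b) = i}
              else 0) = (if c'.1 = R then Nat.card {b : B // degPclass AA BB (.inr b) = i}
              else 0) := by rw [hsym']
          omega

lemma part4 (h : SameIterDeg AA BB) (k0 : ℕ)
    (hst : ∀ x y : (A ⊕ B) ⊕ Cons (dUnion AA BB),
      iterDeg (dUnion AA BB) k0 x = iterDeg (dUnion AA BB) k0 y ↔
      ∀ m, iterDeg (dUnion AA BB) m x = iterDeg (dUnion AA BB) m y) :
    CommonEquitable AA BB := by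
  classical
  refine ⟨((k : ℕ) → DegT (Label σ ar) k), ((k : ℕ) → DegT (Label σ ar) k),
    fun a => degPclass AA BB (.inl a), fun c => degQclass AA BB (consInl AA BB c),
    fun b => degPclass AA BB (.inr b), fun c => degQclass AA BB (consInr AA BB c),
    fun ℓ i j => if h1 : ∃ x : A ⊕ B, degPclass AA BB x = i then
      cntE AA BB h1.choose ℓ j else 0,
    fun ℓ j i => if h1 : ∃ u : Cons AA ⊕ Cons BB, degQclass AA BB (embC AA BB u) = j then
      cntC AA BB h1.choose ℓ i else 0,
    ⟨?_, ?_⟩, ⟨?_, ?_⟩, fun i => classSize AA BB h k0 hst i,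
    fun j => consSize AA BB h k0 hst j⟩
  · intro a ℓ j
    have h1 : ∃ x : A ⊕ B, degPclass AA BB x = degPclass AA BB (.inl a) := ⟨.inl a, rfl⟩
    dsimp only
    rw [dif_pos h1]
    exact (cntE_indep AA BB h k0 hst h1.choose (.inl a) h1.choose_spec ℓ j).symm
  · intro c ℓ i
    have h1 : ∃ u : Cons AA ⊕ Cons BB,
        degQclass AA BB (embC AA BB u) = degQclass AA BB (consInl AA BB c) := ⟨.inl c, rfl⟩
    dsimp only
    rw [dif_pos h1]
    exact (cntC_indep AA BB h k0 hst h1.choose (.inl c) h1.choose_spec ℓ i).symm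
  · intro b ℓ j
    have h1 : ∃ x : A ⊕ B, degPclass AA BB x = degPclass AA BB (.inr b) := ⟨.inr b, rfl⟩
    dsimp only
    rw [dif_pos h1]
    exact (cntE_indep AA BB h k0 hst h1.choose (.inr b) h1.choose_spec ℓ j).symm
  · intro c ℓ i
    have h1 : ∃ u : Cons AA ⊕ Cons BB,
        degQclass AA BB (embC AA BB u) = degQclass AA BB (consInr AA BB c) := ⟨.inr c, rfl⟩
    dsimp only
    rw [dif_pos h1]
    exact (cntC_indep AA BB h k0 hst h1.choose (.inr c) h1.choose_spec ℓ i).symm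
end Two
end Stmt19Aux
theorem stmt19 [Fintype σ] {A B : Type} [Fintype A] [Fintype B]
    (AA : Struct σ ar A) (BB : Struct σ ar B) (h : SameIterDeg AA BB) :
    (∃ cpar dpar, IsEquitable (dUnion AA BB) (degPclass AA BB) (degQclass AA BB) cpar dpar) ∧
    (∀ i : (k : ℕ) → DegT (Label σ ar) k,
      Nat.card {a : A // degPclass AA BB (Sum.inl a) = i} =
        Nat.card {b : B // degPclass AA BB (Sum.inr b) = i}) ∧
    (∀ j : (k : ℕ) → DegT (Label σ ar) k,
      Nat.card {c : Cons AA // degQclass AA BB (consInl AA BB c) = j} =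
        Nat.card {c : Cons BB // degQclass AA BB (consInr AA BB c) = j}) ∧
    CommonEquitable AA BB := by
  classical
  obtain ⟨k0, hst⟩ := Stmt19Aux.exists_stable AA BB
  exact ⟨Stmt19Aux.part1 AA BB k0 hst,
    fun i => Stmt19Aux.classSize AA BB h k0 hst i,
    fun j => Stmt19Aux.consSize AA BB h k0 hst j,
    Stmt19Aux.part4 AA BB h k0 hst⟩

end
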